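/- arXiv:1612.07133 — 2 statements merged into one kernel-verified Lean document; each statement's English description precedes it below -/
import Mathlib

section
/- For a twisted involution w in S_{2n} (not in ι), there exists at most one twisted identity u such that w covers u in the Bruhat order on twisted involutions. -/
open Equiv

/-- Coxeter length of a permutation = number of inversions. -/
def len {N : ℕ} (w : Equiv.Perm (Fin N)) : ℕ :=
  (Finset.univ.filter fun p : Fin N × Fin N => p.1 < p.2 ∧ w p.2 < w p.1).card

/-- The Bruhat order on the symmetric group: reflexive-transitive closure of
right multiplication by a transposition that increases length. -/
def bruhatLE {N : ℕ} (u v : Equiv.Perm (Fin N)) : Prop :=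
  Relation.ReflTransGen
    (fun x y => ∃ t : Equiv.Perm (Fin N), t.IsSwap ∧ y = x * t ∧ len x < len y) u v

/-- The Coxeter generator `s i` (1-based): the transposition of `i` and `i+1`,
i.e. of the 0-based points `i-1` and `i`. -/
def gen (N i : ℕ) : Equiv.Perm (Fin N) :=
  if h : 0 < i ∧ i < N then Equiv.swap ⟨i - 1, by omega⟩ ⟨i, h.2⟩ else 1

/-- The reverse permutation `w₀`, the longest element. -/
def w0 (N : ℕ) : Equiv.Perm (Fin N) := Fin.revPerm

/-- The automorphism θ(w) = w₀ w w₀. -/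
def theta {N : ℕ} (w : Equiv.Perm (Fin N)) : Equiv.Perm (Fin N) := w0 N * w * w0 N

/-- The set ι of twisted identities. -/
def iotaSet (N : ℕ) : Set (Equiv.Perm (Fin N)) := {x | ∃ w, x = theta w⁻¹ * w}

/-- The set of twisted involutions. -/
def twInvSet (N : ℕ) : Set (Equiv.Perm (Fin N)) := {x | theta x = x⁻¹}

/-- Cover relation of the subposet induced by `P` with respect to order relation `le`. -/
def CovByIn {α : Type*} (le : α → α → Prop) (P : Set α) (x y : α) : Prop :=
  x ∈ P ∧ y ∈ P ∧ le x y ∧ x ≠ y ∧ ∀ z ∈ P, le x z → le z y → z = x ∨ z = y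

/-- A special partial matching of the subposet induced by `P` (with maximum `top`)
with respect to the order relation `le`. -/
def IsSPM {α : Type*} (le : α → α → Prop) (P : Set α) (top : α) (M : α → α) : Prop :=
  top ∈ P ∧ (∀ x ∈ P, M x ∈ P) ∧ (∀ x ∈ P, M (M x) = x) ∧
  CovByIn le P (M top) top ∧
  (∀ x ∈ P, CovByIn le P (M x) x ∨ M x = x ∨ CovByIn le P x (M x)) ∧
  ∀ x ∈ P, ∀ y ∈ P, CovByIn le P x y → M x ≠ y → (le (M x) (M y) ∧ M x ≠ M y)

/-- The lower interval ι[e,w] = {x ∈ ι : x ≤ w}. -/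
def iotaIdeal (N : ℕ) (w : Equiv.Perm (Fin N)) : Set (Equiv.Perm (Fin N)) :=
  {x | x ∈ iotaSet N ∧ bruhatLE x w}

/-- The interval ι[u,w] = {x ∈ ι : u ≤ x ≤ w}. -/
def iotaInt (N : ℕ) (u w : Equiv.Perm (Fin N)) : Set (Equiv.Perm (Fin N)) :=
  {x | x ∈ iotaSet N ∧ bruhatLE u x ∧ bruhatLE x w}

/-- The action of the symbol σ_i on twisted involutions: `x·σ = xs` if `θ(s)xs = x`,
and `x·σ = θ(s)xs` otherwise. -/
noncomputable def sact (N : ℕ) (x : Equiv.Perm (Fin N)) (i : ℕ) : Equiv.Perm (Fin N) := by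
  classical
  exact if theta (gen N i) * x * gen N i = x then x * gen N i
        else theta (gen N i) * x * gen N i

/-- The twisted involution `σ_{i₁} ⋯ σ_{i_k}` given by acting on the identity. -/
noncomputable def sword (N : ℕ) (l : List ℕ) : Equiv.Perm (Fin N) := l.foldl (sact N) 1

open Finset

namespace BW
variable {N : ℕ}

/-- prefix-count matrix -/
def d (u : Perm (Fin N)) (x y : ℕ) : ℕ :=
  (Finset.univ.filter fun k : Fin N => (k : ℕ) ≤ x ∧ y ≤ (u k : ℕ)).card

def crit (u v : Perm (Fin N)) : Prop := ∀ x y : ℕ, d u x y ≤ d v x y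

lemma d_eq_sum (u : Perm (Fin N)) (x y : ℕ) :
    d u x y = ∑ k : Fin N, if (k : ℕ) ≤ x ∧ y ≤ (u k : ℕ) then 1 else 0 := by
  rw [d, Finset.card_filter]

/-- the master swap identity -/
lemma d_mul_swap (u : Perm (Fin N)) (p q : Fin N) (hpq : p ≠ q) (x y : ℕ) :
    d (u * Equiv.swap p q) x y
      + ((if (p : ℕ) ≤ x ∧ y ≤ (u p : ℕ) then 1 else 0)
        + (if (q : ℕ) ≤ x ∧ y ≤ (u q : ℕ) then 1 else 0))
    = d u x y
      + ((if (q : ℕ) ≤ x ∧ y ≤ (u p : ℕ) then 1 else 0)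
        + (if (p : ℕ) ≤ x ∧ y ≤ (u q : ℕ) then 1 else 0)) := by
  classical
  have h1 : d (u * Equiv.swap p q) x y
      = ∑ k : Fin N, if ((Equiv.swap p q k : Fin N) : ℕ) ≤ x ∧ y ≤ (u k : ℕ) then 1 else 0 := by
    rw [d_eq_sum]
    exact Fintype.sum_equiv (Equiv.swap p q) _ _ (fun k => by
      simp [Equiv.Perm.mul_apply, Equiv.swap_apply_self]; exact if_congr Iff.rfl rfl rfl)
  rw [h1, d_eq_sum]
  rw [← Finset.add_sum_erase (univ) _ (Finset.mem_univ p),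
      ← Finset.add_sum_erase ((univ : Finset (Fin N)).erase p) _
        (by simp [Finset.mem_erase, hpq.symm] : q ∈ (univ : Finset (Fin N)).erase p)]
  conv_rhs => rw [← Finset.add_sum_erase (univ) _ (Finset.mem_univ p),
      ← Finset.add_sum_erase ((univ : Finset (Fin N)).erase p) _
        (by simp [Finset.mem_erase, hpq.symm] : q ∈ (univ : Finset (Fin N)).erase p)]
  have hs : ∀ k ∈ (((univ : Finset (Fin N)).erase p).erase q),
      (if ((Equiv.swap p q k : Fin N) : ℕ) ≤ x ∧ y ≤ (u k : ℕ) then 1 else 0)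
        = (if (k : ℕ) ≤ x ∧ y ≤ (u k : ℕ) then 1 else 0) := by
    intro k hk
    simp only [Finset.mem_erase] at hk
    rw [Equiv.swap_apply_of_ne_of_ne hk.2.1 hk.1]
  rw [Finset.sum_congr rfl hs, Equiv.swap_apply_left, Equiv.swap_apply_right]
  ring



lemma swap_val (K K1 : Fin N) (hne : K ≠ K1) (a : Fin N) :
    ((Equiv.swap K K1 a : Fin N) : ℕ)
      = if (a:ℕ) = (K:ℕ) then (K1:ℕ) else if (a:ℕ) = (K1:ℕ) then (K:ℕ) else (a:ℕ) := by
  rcases eq_or_ne a K with h | h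
  · subst h; rw [Equiv.swap_apply_left]; simp
  · rcases eq_or_ne a K1 with h2 | h2
    · subst h2
      rw [Equiv.swap_apply_right, if_neg (fun hh => hne (Fin.ext hh.symm)), if_pos rfl]
    · rw [Equiv.swap_apply_of_ne_of_ne h h2,
        if_neg (fun hh => h (Fin.ext hh)), if_neg (fun hh => h2 (Fin.ext hh))]

lemma len_mul_adj_asc (u : Perm (Fin N)) (K K1 : Fin N) (hadj : (K1:ℕ) = (K:ℕ) + 1)
    (h : u K < u K1) :
    len (u * Equiv.swap K K1) = len u + 1 := by
  classical
  have hne : K ≠ K1 := fun e => by rw [e] at hadj; omega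
  set s := Equiv.swap K K1 with hs
  have slt : ∀ a b : Fin N, a < b → ¬(a = K ∧ b = K1) → s a < s b := by
    intro a b hab hne2
    have hab' : (a:ℕ) < (b:ℕ) := hab
    have : ¬((a:ℕ) = (K:ℕ) ∧ (b:ℕ) = (K1:ℕ)) := by
      intro ⟨ha, hb⟩; exact hne2 ⟨Fin.ext ha, Fin.ext hb⟩
    rw [Fin.lt_iff_val_lt_val, swap_val K K1 hne, swap_val K K1 hne]
    split_ifs <;> omega
  have hmem : ((K, K1) : Fin N × Fin N) ∈
      (Finset.univ.filter fun p : Fin N × Fin N => p.1 < p.2 ∧ (u*s) p.2 < (u*s) p.1) := by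
    simp only [Finset.mem_filter, Finset.mem_univ, true_and]
    refine ⟨Fin.lt_iff_val_lt_val.mpr (by omega), ?_⟩
    simpa [Equiv.Perm.mul_apply, s, Equiv.swap_apply_left, Equiv.swap_apply_right] using h
  have key : ((Finset.univ.filter fun p : Fin N × Fin N => p.1 < p.2 ∧ (u*s) p.2 < (u*s) p.1).erase (K, K1)).card
      = (Finset.univ.filter fun p : Fin N × Fin N => p.1 < p.2 ∧ u p.2 < u p.1).card := by
    apply Finset.card_bij' (fun p _ => (s p.1, s p.2)) (fun p _ => (s p.1, s p.2))
    · intro p hp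
      simp only [Finset.mem_erase, Finset.mem_filter, Finset.mem_univ, true_and] at hp
      obtain ⟨hne3, h1, h2⟩ := hp
      simp only [Finset.mem_filter, Finset.mem_univ, true_and]
      refine ⟨slt _ _ h1 ?_, ?_⟩
      · rintro ⟨e1, e2⟩
        exact hne3 (Prod.ext_iff.mpr ⟨e1, e2⟩)
      · simpa [Equiv.Perm.mul_apply, s, Equiv.swap_apply_self] using h2
    · intro p hp
      simp only [Finset.mem_filter, Finset.mem_univ, true_and] at hp
      obtain ⟨h1, h2⟩ := hp
      simp only [Finset.mem_erase, Finset.mem_filter, Finset.mem_univ, true_and]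
      have hne3 : ¬(p.1 = K ∧ p.2 = K1) := by
        rintro ⟨e1, e2⟩
        rw [e1, e2] at h2
        exact absurd h (not_lt.mpr (le_of_lt h2))
      refine ⟨?_, slt _ _ h1 hne3, by simpa [Equiv.Perm.mul_apply, Equiv.swap_apply_self, s] using h2⟩
      · intro hcon
        have e1 : s p.1 = K := congrArg Prod.fst hcon
        have e2 : s p.2 = K1 := congrArg Prod.snd hcon
        have h1' : p.1 = K1 := by
          have : s (s p.1) = s K := congrArg s e1
          simpa [s, Equiv.swap_apply_self, Equiv.swap_apply_left] using this
        have h2' : p.2 = K := by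
          have : s (s p.2) = s K1 := congrArg s e2
          simpa [s, Equiv.swap_apply_self, Equiv.swap_apply_right] using this
        rw [h1', h2'] at h1
        have : (K1:ℕ) < (K:ℕ) := h1
        omega
    · intro p _; simp [s, Equiv.swap_apply_self]
    · intro p _; simp [s, Equiv.swap_apply_self]
  have h4 := Finset.card_pos.mpr ⟨_, hmem⟩
  have h3 := Finset.card_erase_of_mem hmem
  show len (u * s) = len u + 1
  unfold len
  omega

lemma len_mul_adj_desc (u : Perm (Fin N)) (K K1 : Fin N) (hadj : (K1:ℕ) = (K:ℕ) + 1)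
    (h : u K1 < u K) :
    len (u * Equiv.swap K K1) + 1 = len u := by
  have h2 : (u * Equiv.swap K K1) K < (u * Equiv.swap K K1) K1 := by
    simpa [Equiv.Perm.mul_apply, Equiv.swap_apply_left, Equiv.swap_apply_right] using h
  have := len_mul_adj_asc (u * Equiv.swap K K1) K K1 hadj h2
  rw [mul_assoc, Equiv.swap_mul_self, mul_one] at this
  omega





lemma len_mul_swap_asc_aux : ∀ g : ℕ, ∀ (u : Perm (Fin N)) (P Q : Fin N),
    (Q:ℕ) - (P:ℕ) ≤ g → P < Q → u P < u Q → len u < len (u * Equiv.swap P Q) := by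
  intro g
  induction g with
  | zero =>
    intro u P Q hg hlt _
    have : (P:ℕ) < (Q:ℕ) := hlt
    omega
  | succ g ih =>
    intro u P Q hg hlt h
    have hPQv : (P:ℕ) < (Q:ℕ) := hlt
    by_cases hadj : (Q:ℕ) = (P:ℕ) + 1
    · rw [len_mul_adj_asc u P Q hadj h]; omega
    · have hq1 : 1 ≤ (Q:ℕ) := by omega
      set Qm : Fin N := ⟨(Q:ℕ)-1, by omega⟩ with hQm
      have hQmv : (Qm:ℕ) = (Q:ℕ) - 1 := rfl
      have hadj2 : (Q:ℕ) = (Qm:ℕ) + 1 := by omega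
      have hPQm : P < Qm := Fin.lt_iff_val_lt_val.mpr (by omega)
      have hPneQm : P ≠ Qm := ne_of_lt hPQm
      have hPneQ : P ≠ Q := ne_of_lt hlt
      have hQmneQ : Qm ≠ Q := fun e => by rw [e] at hadj2; omega
      set s := Equiv.swap Qm Q with hs
      have sP : s P = P := Equiv.swap_apply_of_ne_of_ne hPneQm hPneQ
      have sQm : s Qm = Q := Equiv.swap_apply_left _ _
      have sQ : s Q = Qm := Equiv.swap_apply_right _ _
      have hconj : Equiv.swap P Q = s * Equiv.swap P Qm * s := by
        have h1 := Equiv.swap_apply_apply s P Qm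
        rw [sP, sQm] at h1
        rw [h1, hs, Equiv.swap_inv]
      have hfact : u * Equiv.swap P Q = ((u * s) * Equiv.swap P Qm) * s := by
        rw [hconj]; group
      set w := u * s with hw
      have wP : w P = u P := by rw [hw, Equiv.Perm.mul_apply, sP]
      have wQm : w Qm = u Q := by rw [hw, Equiv.Perm.mul_apply, sQm]
      have wQ : w Q = u Qm := by rw [hw, Equiv.Perm.mul_apply, sQ]
      set z := w * Equiv.swap P Qm with hz
      have zQm : z Qm = u P := by rw [hz, Equiv.Perm.mul_apply, Equiv.swap_apply_right, wP]
      have zQ : z Q = u Qm := by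
        rw [hz, Equiv.Perm.mul_apply, Equiv.swap_apply_of_ne_of_ne hPneQ.symm hQmneQ.symm, wQ]
      have hzgt : len w < len z := by
        apply ih w P Qm (by omega) hPQm
        rw [wP, wQm]; exact h
      have hACne : u P ≠ u Qm := fun e => hPneQm (u.injective e)
      have hBCne : u Q ≠ u Qm := fun e => hQmneQ (u.injective e).symm
      rw [hfact]
      rcases lt_or_gt_of_ne hBCne with hC | hC
      · -- u Q < u Qm : len w + 1 = len u
        have hlw : len w + 1 = len u := len_mul_adj_desc u Qm Q hadj2 hC
        have hzs : len (z * s) = len z + 1 := by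
          apply len_mul_adj_asc z Qm Q hadj2
          rw [zQm, zQ]; exact lt_trans h hC
        omega
      · -- u Qm < u Q : len w = len u + 1
        have hlw : len w = len u + 1 := len_mul_adj_asc u Qm Q hadj2 hC
        rcases lt_or_gt_of_ne hACne with hA | hA
        · have hzs : len (z * s) = len z + 1 := by
            apply len_mul_adj_asc z Qm Q hadj2
            rw [zQm, zQ]; exact hA
          omega
        · have hzs : len (z * s) + 1 = len z := by
            apply len_mul_adj_desc z Qm Q hadj2
            rw [zQm, zQ]; exact hA
          omega

lemma len_mul_swap_asc (u : Perm (Fin N)) (P Q : Fin N) (hlt : P < Q) (h : u P < u Q) :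
    len u < len (u * Equiv.swap P Q) :=
  len_mul_swap_asc_aux ((Q:ℕ) - (P:ℕ)) u P Q le_rfl hlt h

lemma len_mul_swap_desc (u : Perm (Fin N)) (P Q : Fin N) (hlt : P < Q) (h : u Q < u P) :
    len (u * Equiv.swap P Q) < len u := by
  have h2 : (u * Equiv.swap P Q) P < (u * Equiv.swap P Q) Q := by
    simpa [Equiv.Perm.mul_apply, Equiv.swap_apply_left, Equiv.swap_apply_right] using h
  have := len_mul_swap_asc (u * Equiv.swap P Q) P Q hlt h2
  rwa [mul_assoc, Equiv.swap_mul_self, mul_one] at this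

lemma ascent_of_len_lt (u : Perm (Fin N)) (P Q : Fin N) (hlt : P < Q)
    (h : len u < len (u * Equiv.swap P Q)) : u P < u Q := by
  rcases lt_trichotomy (u P) (u Q) with h1 | h1 | h1
  · exact h1
  · exact absurd h1 (fun e => (ne_of_lt hlt) (u.injective e))
  · exact absurd (len_mul_swap_desc u P Q hlt h1) (by omega)


end BW
-- ===================== Part 4: order basics and direction 1 =====================
namespace BW
variable {N : ℕ}

def bruhatLE' {N : ℕ} (u v : Equiv.Perm (Fin N)) : Prop :=
  Relation.ReflTransGen
    (fun x y => ∃ t : Equiv.Perm (Fin N), t.IsSwap ∧ y = x * t ∧ len x < len y) u v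

open Equiv Finset

lemma le_refl' (u : Perm (Fin N)) : bruhatLE' u u := Relation.ReflTransGen.refl

lemma le_trans' {u v w : Perm (Fin N)} (h1 : bruhatLE' u v) (h2 : bruhatLE' v w) :
    bruhatLE' u w := Relation.ReflTransGen.trans h1 h2

lemma le_step {u t : Perm (Fin N)} (ht : t.IsSwap) (h : len u < len (u * t)) :
    bruhatLE' u (u * t) := Relation.ReflTransGen.single ⟨t, ht, rfl, h⟩

lemma len_le_of_le {u v : Perm (Fin N)} (h : bruhatLE' u v) : len u ≤ len v := by
  induction h with
  | refl => exact le_rfl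
  | tail h1 h2 ih => obtain ⟨t, _, rfl, hl⟩ := h2; omega

lemma le_step_left {t z : Perm (Fin N)} (ht : t.IsSwap) (h : len (t * z) < len z) :
    bruhatLE' (t * z) z := by
  obtain ⟨i, j, hij, rfl⟩ := ht
  set X := Equiv.swap i j * z with hX
  have hc : (X⁻¹ * Equiv.swap i j * (X⁻¹)⁻¹).IsSwap := by
    rw [← Equiv.swap_apply_apply]
    exact ⟨_, _, fun e => hij (X⁻¹.injective e), rfl⟩
  have key : X * (X⁻¹ * Equiv.swap i j * (X⁻¹)⁻¹) = z := by
    simp only [inv_inv]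
    rw [show X * (X⁻¹ * Equiv.swap i j * X) = Equiv.swap i j * X by group, hX,
      ← mul_assoc, Equiv.swap_mul_self, one_mul]
  have hstep := le_step hc (by rw [key]; exact h)
  rwa [key] at hstep

lemma le_step_left' {t z : Perm (Fin N)} (ht : t.IsSwap) (h : len z < len (t * z)) :
    bruhatLE' z (t * z) := by
  obtain ⟨i, j, hij, rfl⟩ := ht
  have hc : (z⁻¹ * Equiv.swap i j * (z⁻¹)⁻¹).IsSwap := by
    rw [← Equiv.swap_apply_apply]
    exact ⟨_, _, fun e => hij (z⁻¹.injective e), rfl⟩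
  have key : z * (z⁻¹ * Equiv.swap i j * (z⁻¹)⁻¹) = Equiv.swap i j * z := by
    simp only [inv_inv]; group
  have hstep := le_step hc (by rw [key]; exact h)
  rwa [key] at hstep

lemma crit_mul_swap_asc (u : Perm (Fin N)) (P Q : Fin N) (hlt : P < Q) (h : u P < u Q) :
    crit u (u * Equiv.swap P Q) := by
  intro x y
  have master := d_mul_swap u P Q (ne_of_lt hlt) x y
  have h1 : (P:ℕ) < (Q:ℕ) := hlt
  have h2 : ((u P):ℕ) < ((u Q):ℕ) := h
  split_ifs at master <;> omega

lemma step_crit {u v : Perm (Fin N)}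
    (h : ∃ t : Perm (Fin N), t.IsSwap ∧ v = u * t ∧ len u < len v) : crit u v := by
  obtain ⟨t, ⟨i, j, hij, rfl⟩, rfl, hl⟩ := h
  rcases lt_or_gt_of_ne hij with hij' | hij'
  · exact crit_mul_swap_asc u i j hij' (ascent_of_len_lt u i j hij' hl)
  · rw [Equiv.swap_comm] at hl ⊢
    exact crit_mul_swap_asc u j i hij' (ascent_of_len_lt u j i hij' hl)

lemma le_crit {u v : Perm (Fin N)} (h : bruhatLE' u v) : crit u v := by
  induction h with
  | refl => exact fun x y => le_rfl
  | tail h1 h2 ih => exact fun x y => le_trans (ih x y) (step_crit h2 x y)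

lemma len_inv (w : Perm (Fin N)) : len w⁻¹ = len w := by
  classical
  unfold len
  apply Finset.card_bij' (fun p _ => ((w⁻¹ p.2 : Fin N), (w⁻¹ p.1 : Fin N)))
    (fun p _ => ((w p.2 : Fin N), (w p.1 : Fin N)))
  · intro p hp
    simp only [Finset.mem_filter, Finset.mem_univ, true_and] at hp ⊢
    exact ⟨hp.2, by simpa using hp.1⟩
  · intro p hp
    simp only [Finset.mem_filter, Finset.mem_univ, true_and] at hp ⊢
    exact ⟨hp.2, by simpa using hp.1⟩
  · intro p _; simp
  · intro p _; simp

lemma le_inv {u v : Perm (Fin N)} (h : bruhatLE' u v) : bruhatLE' u⁻¹ v⁻¹ := by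
  induction h with
  | refl => exact Relation.ReflTransGen.refl
  | @tail b c h1 h2 ih =>
    obtain ⟨t, ⟨i, j, hij, rfl⟩, rfl, hl⟩ := h2
    have hc : (b * Equiv.swap i j * b⁻¹).IsSwap := by
      rw [← Equiv.swap_apply_apply]
      exact ⟨_, _, fun e => hij (b.injective e), rfl⟩
    have e : (b * Equiv.swap i j)⁻¹ = b⁻¹ * (b * Equiv.swap i j * b⁻¹) := by
      rw [mul_inv_rev, Equiv.swap_inv]; group
    refine Relation.ReflTransGen.tail ih ⟨b * Equiv.swap i j * b⁻¹, hc, e, ?_⟩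
    rw [len_inv, len_inv]; exact hl

end BW

-- ===================== Part 5: criterion implies Bruhat order =====================
namespace BW
variable {N : ℕ}
open Equiv Finset

lemma sum_split_at (r : Fin N) (f : Fin N → ℕ) :
    ∑ k : Fin N, f k
      = (∑ k ∈ Finset.univ.filter (fun k : Fin N => (k:ℕ) < (r:ℕ)), f k) + f r
        + ∑ k ∈ Finset.univ.filter (fun k : Fin N => (r:ℕ) < (k:ℕ)), f k := by
  classical
  set A := Finset.univ.filter (fun k : Fin N => (k:ℕ) < (r:ℕ)) with hA
  set B := Finset.univ.filter (fun k : Fin N => (r:ℕ) < (k:ℕ)) with hB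
  have hdisj1 : Disjoint A ({r} ∪ B) := by
    rw [Finset.disjoint_left]; intro a ha hb
    simp only [hA, hB, Finset.mem_filter, Finset.mem_union, Finset.mem_singleton,
      Finset.mem_univ, true_and] at ha hb
    rcases hb with hb | hb
    · subst hb; omega
    · omega
  have hdisj2 : Disjoint ({r} : Finset (Fin N)) B := by
    rw [Finset.disjoint_left]; intro a ha hb
    simp only [hB, Finset.mem_filter, Finset.mem_singleton, Finset.mem_univ, true_and] at ha hb
    subst ha; omega
  have huniv : A ∪ ({r} ∪ B) = (Finset.univ : Finset (Fin N)) := by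
    apply Finset.eq_univ_iff_forall.mpr
    intro k
    simp only [hA, hB, Finset.mem_union, Finset.mem_filter, Finset.mem_singleton,
      Finset.mem_univ, true_and]
    rcases lt_trichotomy ((k:ℕ)) ((r:ℕ)) with h|h|h
    · exact Or.inl h
    · exact Or.inr (Or.inl (Fin.ext h))
    · exact Or.inr (Or.inr h)
  conv_lhs => rw [← huniv]
  rw [Finset.sum_union hdisj1, Finset.sum_union hdisj2, Finset.sum_singleton]
  ring

lemma exists_first_diff {u v : Perm (Fin N)} (hne : u ≠ v) :
    ∃ r : Fin N, u r ≠ v r ∧ ∀ k : Fin N, (k:ℕ) < (r:ℕ) → u k = v k := by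
  classical
  set D := Finset.univ.filter (fun k : Fin N => u k ≠ v k) with hD
  have hDne : D.Nonempty := by
    by_contra hcon
    apply hne
    apply Equiv.ext
    intro k
    by_contra hk
    exact hcon ⟨k, by simp [hD, hk]⟩
  refine ⟨D.min' hDne, ?_, ?_⟩
  · have := D.min'_mem hDne
    simpa [hD] using this
  · intro k hk
    by_contra hcon
    have hkD : k ∈ D := by simp [hD, hcon]
    have h2 : ((D.min' hDne : Fin N) : ℕ) ≤ (k : ℕ) := D.min'_le k hkD
    omega

lemma first_diff_lt {u v : Perm (Fin N)} (hc : crit u v) (r : Fin N)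
    (hne : u r ≠ v r) (hmin : ∀ k : Fin N, (k:ℕ) < (r:ℕ) → u k = v k) :
    (u r : ℕ) < (v r : ℕ) := by
  classical
  by_contra hcon
  have hlt : (v r : ℕ) < (u r : ℕ) := by
    rcases lt_trichotomy ((u r : ℕ)) ((v r : ℕ)) with h|h|h
    · omega
    · exact absurd (Fin.ext h) hne
    · exact h
  have hsub : (Finset.univ.filter fun k : Fin N => (k:ℕ) ≤ (r:ℕ) ∧ (u r : ℕ) ≤ (v k : ℕ))
      ⊆ (Finset.univ.filter fun k : Fin N => (k:ℕ) ≤ (r:ℕ) ∧ (u r : ℕ) ≤ (u k : ℕ)).erase r := by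
    intro k hk
    simp only [Finset.mem_filter, Finset.mem_univ, true_and] at hk
    have hkr : (k:ℕ) ≠ (r:ℕ) := by
      intro e
      have : k = r := Fin.ext e
      subst this
      omega
    have hklt : (k:ℕ) < (r:ℕ) := by omega
    rw [Finset.mem_erase]
    refine ⟨fun e => hkr (congrArg Fin.val e), ?_⟩
    simp only [Finset.mem_filter, Finset.mem_univ, true_and]
    rw [hmin k hklt]
    exact ⟨hk.1, hk.2⟩
  have hmem : r ∈ (Finset.univ.filter fun k : Fin N => (k:ℕ) ≤ (r:ℕ) ∧ (u r : ℕ) ≤ (u k : ℕ)) := by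
    simp
  have h1 := Finset.card_le_card hsub
  have h2 := Finset.card_erase_of_mem hmem
  have h3 := Finset.card_pos.mpr ⟨_, hmem⟩
  have h4 := hc ((r:ℕ)) ((u r : ℕ))
  unfold d at h4
  omega

lemma rect_strict {u v : Perm (Fin N)} (hc : crit u v) (r q : Fin N)
    (hur : (u r : ℕ) < (v r : ℕ)) (hpre : ∀ k : Fin N, (k:ℕ) < (r:ℕ) → u k = v k)
    (hrq : (r:ℕ) < (q:ℕ)) (huq1 : (u r : ℕ) < (u q : ℕ)) (huq2 : (u q : ℕ) ≤ (v r : ℕ))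
    (hmin : ∀ k : Fin N, (r:ℕ) < (k:ℕ) → (k:ℕ) < (q:ℕ) →
      ¬((u r : ℕ) < (u k : ℕ) ∧ (u k : ℕ) ≤ (v r : ℕ)))
    (x y : ℕ) (hx1 : (r:ℕ) ≤ x) (hx2 : x < (q:ℕ)) (hy1 : (u r : ℕ) < y) (hy2 : y ≤ (u q : ℕ)) :
    d u x y + 1 ≤ d v x y := by
  classical
  have EU := (d_eq_sum u x y).trans
    (sum_split_at r (fun k : Fin N => if (k:ℕ) ≤ x ∧ y ≤ (u k : ℕ) then 1 else 0))
  have EV := (d_eq_sum v x y).trans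
    (sum_split_at r (fun k : Fin N => if (k:ℕ) ≤ x ∧ y ≤ (v k : ℕ) then 1 else 0))
  have EU' := (d_eq_sum u x ((v r : ℕ) + 1)).trans
    (sum_split_at r (fun k : Fin N => if (k:ℕ) ≤ x ∧ (v r : ℕ) + 1 ≤ (u k : ℕ) then 1 else 0))
  have EV' := (d_eq_sum v x ((v r : ℕ) + 1)).trans
    (sum_split_at r (fun k : Fin N => if (k:ℕ) ≤ x ∧ (v r : ℕ) + 1 ≤ (v k : ℕ) then 1 else 0))
  have hAeq : (∑ k ∈ Finset.univ.filter (fun k : Fin N => (k:ℕ) < (r:ℕ)),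
        if (k:ℕ) ≤ x ∧ y ≤ (u k : ℕ) then 1 else 0)
      = ∑ k ∈ Finset.univ.filter (fun k : Fin N => (k:ℕ) < (r:ℕ)),
        if (k:ℕ) ≤ x ∧ y ≤ (v k : ℕ) then 1 else 0 := by
    apply Finset.sum_congr rfl
    intro k hk
    simp only [Finset.mem_filter, Finset.mem_univ, true_and] at hk
    rw [hpre k hk]
  have hA'eq : (∑ k ∈ Finset.univ.filter (fun k : Fin N => (k:ℕ) < (r:ℕ)),
        if (k:ℕ) ≤ x ∧ (v r : ℕ) + 1 ≤ (u k : ℕ) then 1 else 0)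
      = ∑ k ∈ Finset.univ.filter (fun k : Fin N => (k:ℕ) < (r:ℕ)),
        if (k:ℕ) ≤ x ∧ (v r : ℕ) + 1 ≤ (v k : ℕ) then 1 else 0 := by
    apply Finset.sum_congr rfl
    intro k hk
    simp only [Finset.mem_filter, Finset.mem_univ, true_and] at hk
    rw [hpre k hk]
  have hfur : (if (r:ℕ) ≤ x ∧ y ≤ (u r : ℕ) then 1 else 0) = 0 := by rw [if_neg]; omega
  have hfvr : (if (r:ℕ) ≤ x ∧ y ≤ (v r : ℕ) then 1 else 0) = 1 := by rw [if_pos]; omega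
  have hgur : (if (r:ℕ) ≤ x ∧ (v r : ℕ) + 1 ≤ (u r : ℕ) then 1 else 0) = 0 := by rw [if_neg]; omega
  have hgvr : (if (r:ℕ) ≤ x ∧ (v r : ℕ) + 1 ≤ (v r : ℕ) then 1 else 0) = 0 := by rw [if_neg]; omega
  have hCeq : (∑ k ∈ Finset.univ.filter (fun k : Fin N => (r:ℕ) < (k:ℕ)),
        if (k:ℕ) ≤ x ∧ y ≤ (u k : ℕ) then 1 else 0)
      = ∑ k ∈ Finset.univ.filter (fun k : Fin N => (r:ℕ) < (k:ℕ)),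
        if (k:ℕ) ≤ x ∧ (v r : ℕ) + 1 ≤ (u k : ℕ) then 1 else 0 := by
    apply Finset.sum_congr rfl
    intro k hk
    simp only [Finset.mem_filter, Finset.mem_univ, true_and] at hk
    by_cases h1 : (k:ℕ) ≤ x ∧ y ≤ (u k : ℕ)
    · have hklt : (k:ℕ) < (q:ℕ) := by omega
      have := hmin k hk hklt
      rw [if_pos h1, if_pos ⟨h1.1, by omega⟩]
    · rw [if_neg h1, if_neg]
      intro h2
      exact h1 ⟨h2.1, by omega⟩
  have hCle : (∑ k ∈ Finset.univ.filter (fun k : Fin N => (r:ℕ) < (k:ℕ)),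
        if (k:ℕ) ≤ x ∧ (v r : ℕ) + 1 ≤ (v k : ℕ) then 1 else 0)
      ≤ ∑ k ∈ Finset.univ.filter (fun k : Fin N => (r:ℕ) < (k:ℕ)),
        if (k:ℕ) ≤ x ∧ y ≤ (v k : ℕ) then 1 else 0 := by
    apply Finset.sum_le_sum
    intro k hk
    by_cases h1 : (k:ℕ) ≤ x ∧ (v r : ℕ) + 1 ≤ (v k : ℕ)
    · rw [if_pos h1, if_pos ⟨h1.1, by omega⟩]
    · rw [if_neg h1]; omega
  have hcx := hc x ((v r : ℕ) + 1)
  omega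

lemma crit_measure_pos {u v : Perm (Fin N)} (hc : crit u v) (hne : u ≠ v) :
    0 < ∑ p ∈ Finset.range N ×ˢ Finset.range N, (d v p.1 p.2 - d u p.1 p.2) := by
  classical
  obtain ⟨r, hr, hrmin⟩ := exists_first_diff hne
  have hur := first_diff_lt hc r hr hrmin
  have hpt : d u ((r:ℕ)) ((v r : ℕ)) < d v ((r:ℕ)) ((v r : ℕ)) := by
    have hsub : (Finset.univ.filter fun k : Fin N => (k:ℕ) ≤ (r:ℕ) ∧ (v r : ℕ) ≤ (u k : ℕ))
        ⊆ (Finset.univ.filter fun k : Fin N => (k:ℕ) ≤ (r:ℕ) ∧ (v r : ℕ) ≤ (v k : ℕ)).erase r := by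
      intro k hk
      simp only [Finset.mem_filter, Finset.mem_univ, true_and] at hk
      have hkr : (k:ℕ) ≠ (r:ℕ) := by
        intro e
        have : k = r := Fin.ext e
        subst this
        omega
      rw [Finset.mem_erase]
      refine ⟨fun e => hkr (congrArg Fin.val e), ?_⟩
      simp only [Finset.mem_filter, Finset.mem_univ, true_and]
      rw [← hrmin k (by omega)]
      exact ⟨hk.1, hk.2⟩
    have hmem : r ∈ (Finset.univ.filter fun k : Fin N => (k:ℕ) ≤ (r:ℕ) ∧ (v r : ℕ) ≤ (v k : ℕ)) := by
      simp
    have h1 := Finset.card_le_card hsub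
    have h2 := Finset.card_erase_of_mem hmem
    have h3 := Finset.card_pos.mpr ⟨_, hmem⟩
    unfold d
    omega
  have hmem2 : ((r:ℕ), (v r : ℕ)) ∈ Finset.range N ×ˢ Finset.range N := by
    rw [Finset.mem_product, Finset.mem_range, Finset.mem_range]
    exact ⟨r.isLt, (v r).isLt⟩
  apply Finset.sum_pos' (fun i _ => Nat.zero_le _)
  exact ⟨_, hmem2, by dsimp only; omega⟩

lemma crit_le_aux : ∀ (m : ℕ) (u v : Perm (Fin N)),
    (∑ p ∈ Finset.range N ×ˢ Finset.range N, (d v p.1 p.2 - d u p.1 p.2)) ≤ m →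
    crit u v → bruhatLE' u v := by
  intro m
  induction m with
  | zero =>
    intro u v hm hc
    rcases eq_or_ne u v with rfl | hne
    · exact le_refl' u
    · exact absurd (crit_measure_pos hc hne) (by omega)
  | succ m ih =>
    intro u v hm hc
    rcases eq_or_ne u v with rfl | hne
    · exact le_refl' u
    obtain ⟨r, hr, hrmin⟩ := exists_first_diff hne
    have hur := first_diff_lt hc r hr hrmin
    classical
    set D := Finset.univ.filter (fun k : Fin N => (r:ℕ) < (k:ℕ) ∧ (u r : ℕ) < (u k : ℕ) ∧ (u k : ℕ) ≤ (v r : ℕ)) with hD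
    have hDne : D.Nonempty := by
      refine ⟨u⁻¹ (v r), ?_⟩
      have hval : u (u⁻¹ (v r)) = v r := u.apply_symm_apply (v r)
      simp only [hD, Finset.mem_filter, Finset.mem_univ, true_and]
      have hne1 : u⁻¹ (v r) ≠ r := by
        intro e
        rw [e] at hval
        exact hr hval
      have hne2 : ¬((u⁻¹ (v r) : Fin N) : ℕ) < (r:ℕ) := by
        intro hlt
        have heq := hrmin _ hlt
        rw [heq] at hval
        exact hne1 (v.injective hval)
      have hgt : (r:ℕ) < ((u⁻¹ (v r) : Fin N) : ℕ) := by
        rcases lt_trichotomy ((u⁻¹ (v r) : Fin N) : ℕ) ((r:ℕ)) with h|h|h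
        · exact absurd h hne2
        · exact absurd (Fin.ext h) hne1
        · exact h
      rw [hval]
      exact ⟨hgt, hur, le_rfl⟩
    have hqmem := D.min'_mem hDne
    simp only [hD, Finset.mem_filter, Finset.mem_univ, true_and] at hqmem
    obtain ⟨hrq, huq1, huq2⟩ := hqmem
    have hqmin : ∀ k : Fin N, (r:ℕ) < (k:ℕ) → (k:ℕ) < ((D.min' hDne : Fin N):ℕ) →
        ¬((u r : ℕ) < (u k : ℕ) ∧ (u k : ℕ) ≤ (v r : ℕ)) := by
      intro k h1 h2 hcon
      have hkD : k ∈ D := by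
        simp only [hD, Finset.mem_filter, Finset.mem_univ, true_and]
        exact ⟨h1, hcon.1, hcon.2⟩
      have h3 : ((D.min' hDne : Fin N) : ℕ) ≤ (k:ℕ) := D.min'_le k hkD
      omega
    have hrqF : r < D.min' hDne := Fin.lt_iff_val_lt_val.mpr hrq
    have hurq : u r < u (D.min' hDne) := Fin.lt_iff_val_lt_val.mpr huq1
    have hcu' : crit u (u * Equiv.swap r (D.min' hDne)) := crit_mul_swap_asc u r _ hrqF hurq
    have hlen : len u < len (u * Equiv.swap r (D.min' hDne)) := len_mul_swap_asc u r _ hrqF hurq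
    have hcrit' : crit (u * Equiv.swap r (D.min' hDne)) v := by
      intro x y
      have master := d_mul_swap u r (D.min' hDne) (ne_of_lt hrqF) x y
      by_cases hrect : (r:ℕ) ≤ x ∧ x < ((D.min' hDne : Fin N):ℕ) ∧ (u r : ℕ) < y ∧ y ≤ ((u (D.min' hDne) : Fin N) : ℕ)
      · have := rect_strict hc r (D.min' hDne) hur hrmin hrq huq1 huq2 hqmin x y
          hrect.1 hrect.2.1 hrect.2.2.1 hrect.2.2.2
        split_ifs at master <;> omega
      · have hle := hc x y
        push_neg at hrect
        split_ifs at master <;> omega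
    have hpt : d u ((r:ℕ)) (((u (D.min' hDne) : Fin N)) : ℕ) + 1
        ≤ d (u * Equiv.swap r (D.min' hDne)) ((r:ℕ)) (((u (D.min' hDne) : Fin N)) : ℕ) := by
      have master := d_mul_swap u r (D.min' hDne) (ne_of_lt hrqF) ((r:ℕ)) (((u (D.min' hDne) : Fin N)) : ℕ)
      split_ifs at master <;> omega
    have hmem2 : ((r:ℕ), ((u (D.min' hDne) : Fin N) : ℕ)) ∈ Finset.range N ×ˢ Finset.range N := by
      rw [Finset.mem_product, Finset.mem_range, Finset.mem_range]
      exact ⟨r.isLt, (u _).isLt⟩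
    have hdec : (∑ p ∈ Finset.range N ×ˢ Finset.range N, (d v p.1 p.2 - d (u * Equiv.swap r (D.min' hDne)) p.1 p.2))
        < ∑ p ∈ Finset.range N ×ˢ Finset.range N, (d v p.1 p.2 - d u p.1 p.2) := by
      apply Finset.sum_lt_sum
      · intro p _
        have h1 := hcu' p.1 p.2
        omega
      · refine ⟨_, hmem2, ?_⟩
        have h2 := hcrit' ((r:ℕ)) (((u (D.min' hDne) : Fin N)) : ℕ)
        dsimp only
        omega
    have hstep : bruhatLE' u (u * Equiv.swap r (D.min' hDne)) :=
      le_step ⟨r, D.min' hDne, ne_of_lt hrqF, rfl⟩ hlen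
    exact le_trans' hstep (ih _ v (by omega) hcrit')

theorem le_iff_crit {u v : Perm (Fin N)} : bruhatLE' u v ↔ crit u v :=
  ⟨le_crit, fun hc => crit_le_aux _ u v le_rfl hc⟩

lemma len_lt_of_le_ne {u v : Perm (Fin N)} (h : bruhatLE' u v) (hne : u ≠ v) :
    len u < len v := by
  rcases Relation.ReflTransGen.cases_head h with rfl | ⟨c, hc, hcv⟩
  · exact absurd rfl hne
  · obtain ⟨t, _, rfl, hl⟩ := hc
    exact lt_of_lt_of_le hl (len_le_of_le hcv)

end BW

-- ===================== Part 6: lifting lemmas =====================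
namespace BW
variable {N : ℕ}
open Equiv Finset

def dpre (u : Perm (Fin N)) (x y : ℕ) : ℕ :=
  (Finset.univ.filter fun k : Fin N => (k:ℕ) < x ∧ y ≤ (u k : ℕ)).card

lemma d_eq_dpre_succ (u : Perm (Fin N)) (x y : ℕ) : d u x y = dpre u (x+1) y := by
  unfold d dpre
  congr 1
  apply Finset.filter_congr
  intro k _
  constructor
  · exact fun h => ⟨by omega, h.2⟩
  · exact fun h => ⟨by omega, h.2⟩

lemma dpre_mono {u w : Perm (Fin N)} (h : crit u w) (x y : ℕ) : dpre u x y ≤ dpre w x y := by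
  rcases Nat.eq_zero_or_pos x with rfl | hx
  · have hgen : ∀ z : Perm (Fin N), (Finset.univ.filter fun k : Fin N => (k:ℕ) < 0 ∧ y ≤ (z k : ℕ)) = ∅ := by
      intro z
      apply Finset.filter_false_of_mem
      intro k _
      simp
    unfold dpre
    rw [hgen u, hgen w]
  · obtain ⟨x', rfl⟩ : ∃ x', x = x' + 1 := ⟨x - 1, by omega⟩
    rw [← d_eq_dpre_succ, ← d_eq_dpre_succ]
    exact h x' y

lemma sum_extract (X : Fin N) (f : Fin N → Prop) [DecidablePred f] :
    ∑ k : Fin N, (if k = X ∧ f k then 1 else 0) = (if f X then 1 else 0) := by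
  classical
  rw [Finset.sum_eq_single_of_mem X (Finset.mem_univ X)]
  · simp
  · intro b _ hb
    rw [if_neg (fun hh => hb hh.1)]

lemma d_eq_dpre_add (u : Perm (Fin N)) (X : Fin N) (y : ℕ) :
    d u ((X:ℕ)) y = dpre u ((X:ℕ)) y + (if y ≤ (u X : ℕ) then 1 else 0) := by
  classical
  unfold d dpre
  rw [Finset.card_filter, Finset.card_filter]
  have hterm : ∀ k : Fin N, (if (k:ℕ) ≤ (X:ℕ) ∧ y ≤ (u k : ℕ) then 1 else 0)
      = (if (k:ℕ) < (X:ℕ) ∧ y ≤ (u k : ℕ) then 1 else 0) + (if k = X ∧ y ≤ (u k : ℕ) then 1 else 0) := by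
    intro k
    by_cases hk : k = X
    · subst hk
      rw [show (if k = k ∧ y ≤ (u k : ℕ) then (1:ℕ) else 0) = (if y ≤ (u k : ℕ) then 1 else 0) by simp]
      split_ifs <;> omega
    · have hkX : (k:ℕ) ≠ (X:ℕ) := fun e => hk (Fin.ext e)
      rw [show (if k = X ∧ y ≤ (u k : ℕ) then (1:ℕ) else 0) = 0 from if_neg (fun hh => hk hh.1)]
      split_ifs <;> omega
  rw [Finset.sum_congr rfl (fun k _ => hterm k), Finset.sum_add_distrib, sum_extract]

lemma d_succ (u : Perm (Fin N)) (x : ℕ) (X : Fin N) (hX : (X:ℕ) = x + 1) (y : ℕ) :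
    d u (x+1) y = d u x y + (if y ≤ (u X : ℕ) then 1 else 0) := by
  classical
  unfold d
  rw [Finset.card_filter, Finset.card_filter]
  have hterm : ∀ k : Fin N, (if (k:ℕ) ≤ x + 1 ∧ y ≤ (u k : ℕ) then 1 else 0)
      = (if (k:ℕ) ≤ x ∧ y ≤ (u k : ℕ) then 1 else 0) + (if k = X ∧ y ≤ (u k : ℕ) then 1 else 0) := by
    intro k
    by_cases hk : k = X
    · subst hk
      rw [show (if k = k ∧ y ≤ (u k : ℕ) then (1:ℕ) else 0) = (if y ≤ (u k : ℕ) then 1 else 0) by simp]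
      have : (k:ℕ) = x + 1 := hX
      split_ifs <;> omega
    · have hkX : (k:ℕ) ≠ (X:ℕ) := fun e => hk (Fin.ext e)
      rw [show (if k = X ∧ y ≤ (u k : ℕ) then (1:ℕ) else 0) = 0 from if_neg (fun hh => hk hh.1)]
      split_ifs <;> omega
  rw [Finset.sum_congr rfl (fun k _ => hterm k), Finset.sum_add_distrib, sum_extract]

section Adjacent
variable (K K1 : Fin N)

lemma adjKne (hadj : (K1:ℕ) = (K:ℕ) + 1) : K ≠ K1 := fun e => by rw [e] at hadj; omega

lemma d_mul_adj_ne (hadj : (K1:ℕ) = (K:ℕ) + 1) (u : Perm (Fin N)) (x y : ℕ) (hx : x ≠ (K:ℕ)) :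
    d (u * Equiv.swap K K1) x y = d u x y := by
  have master := d_mul_swap u K K1 (adjKne K K1 hadj) x y
  have h1 : (K1:ℕ) = (K:ℕ) + 1 := hadj
  split_ifs at master <;> omega

lemma dpre_mul_adj (hadj : (K1:ℕ) = (K:ℕ) + 1) (u : Perm (Fin N)) (y : ℕ) :
    dpre (u * Equiv.swap K K1) ((K:ℕ)) y = dpre u ((K:ℕ)) y := by
  unfold dpre
  congr 1
  apply Finset.filter_congr
  intro k _
  by_cases hk : (k:ℕ) < (K:ℕ)
  · have hne1 : k ≠ K := fun e => by rw [e] at hk; omega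
    have hne2 : k ≠ K1 := fun e => by
      rw [e] at hk
      have : (K1:ℕ) = (K:ℕ) + 1 := hadj
      omega

    rw [Equiv.Perm.mul_apply, Equiv.swap_apply_of_ne_of_ne hne1 hne2]
  · simp [hk]

lemma d_mul_adj_K (hadj : (K1:ℕ) = (K:ℕ) + 1) (u : Perm (Fin N)) (y : ℕ) :
    d (u * Equiv.swap K K1) ((K:ℕ)) y = dpre u ((K:ℕ)) y + (if y ≤ (u K1 : ℕ) then 1 else 0) := by
  have h1 := d_eq_dpre_add (u * Equiv.swap K K1) K y
  rw [dpre_mul_adj K K1 hadj] at h1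
  rw [h1]
  congr 2
  rw [Equiv.Perm.mul_apply, Equiv.swap_apply_left]

lemma d_K (u : Perm (Fin N)) (y : ℕ) :
    d u ((K:ℕ)) y = dpre u ((K:ℕ)) y + (if y ≤ (u K : ℕ) then 1 else 0) :=
  d_eq_dpre_add u K y

lemma d_K1 (hadj : (K1:ℕ) = (K:ℕ) + 1) (u : Perm (Fin N)) (y : ℕ) :
    d u ((K:ℕ)+1) y = d u ((K:ℕ)) y + (if y ≤ (u K1 : ℕ) then 1 else 0) :=
  d_succ u ((K:ℕ)) K1 hadj y

-- P1 : w descent, u ≤ w  ⟹  u s ≤ w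
lemma P1 (hadj : (K1:ℕ) = (K:ℕ) + 1) {u w : Perm (Fin N)} (hdw : (w K1 : ℕ) < (w K : ℕ)) (h : crit u w) :
    crit (u * Equiv.swap K K1) w := by
  intro x y
  by_cases hx : x = (K:ℕ)
  · subst hx
    have e1 := d_mul_adj_K K K1 hadj u y
    have e2 := d_K K u y
    have e3 := d_K K w y
    have e4 := d_K1 K K1 hadj u y
    have e5 := d_K1 K K1 hadj w y
    have hKrow := h ((K:ℕ)) y
    have hK1row := h ((K:ℕ)+1) y
    have hpre := dpre_mono h ((K:ℕ)) y
    have hDC : (if y ≤ (w K1 : ℕ) then 1 else 0) ≤ (if y ≤ (w K : ℕ) then 1 else 0) := by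
      split_ifs <;> omega
    split_ifs at * <;> omega
  · rw [d_mul_adj_ne K K1 hadj u x y hx]
    exact h x y

-- P2 : both descents, u ≤ w ⟹ u s ≤ w s
lemma P2 (hadj : (K1:ℕ) = (K:ℕ) + 1) {u w : Perm (Fin N)} (hdw : (w K1 : ℕ) < (w K : ℕ)) (hdu : (u K1 : ℕ) < (u K : ℕ))
    (h : crit u w) : crit (u * Equiv.swap K K1) (w * Equiv.swap K K1) := by
  intro x y
  by_cases hx : x = (K:ℕ)
  · subst hx
    have e1 := d_mul_adj_K K K1 hadj u y
    have e2 := d_mul_adj_K K K1 hadj w y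
    have e3 := d_K K u y
    have e4 := d_K K w y
    have e5 := d_K1 K K1 hadj u y
    have e6 := d_K1 K K1 hadj w y
    have hKrow := h ((K:ℕ)) y
    have hK1row := h ((K:ℕ)+1) y
    have hpre := dpre_mono h ((K:ℕ)) y
    split_ifs at * <;> omega
  · rw [d_mul_adj_ne K K1 hadj u x y hx, d_mul_adj_ne K K1 hadj w x y hx]
    exact h x y

-- P3 : w descent, u ascent, u ≤ w ⟹ u ≤ w s
lemma P3 (hadj : (K1:ℕ) = (K:ℕ) + 1) {u w : Perm (Fin N)} (hdw : (w K1 : ℕ) < (w K : ℕ)) (hdu : (u K : ℕ) < (u K1 : ℕ))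
    (h : crit u w) : crit u (w * Equiv.swap K K1) := by
  intro x y
  by_cases hx : x = (K:ℕ)
  · subst hx
    have e1 := d_mul_adj_K K K1 hadj w y
    have e2 := d_K K u y
    have e3 := d_K K w y
    have e4 := d_K1 K K1 hadj u y
    have e5 := d_K1 K K1 hadj w y
    have hKrow := h ((K:ℕ)) y
    have hK1row := h ((K:ℕ)+1) y
    have hpre := dpre_mono h ((K:ℕ)) y
    split_ifs at * <;> omega
  · rw [d_mul_adj_ne K K1 hadj w x y hx]
    exact h x y

-- P4 : w descent, u ascent, u ≤ w s ⟹ u s ≤ w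
lemma P4 (hadj : (K1:ℕ) = (K:ℕ) + 1) {u w : Perm (Fin N)} (hdw : (w K1 : ℕ) < (w K : ℕ)) (hdu : (u K : ℕ) < (u K1 : ℕ))
    (h : crit u (w * Equiv.swap K K1)) : crit (u * Equiv.swap K K1) w := by
  intro x y
  by_cases hx : x = (K:ℕ)
  · subst hx
    have e1 := d_mul_adj_K K K1 hadj u y
    have e2 := d_mul_adj_K K K1 hadj w y
    have e3 := d_K K u y
    have e4 := d_K K w y
    have e5 := d_K1 K K1 hadj u y
    have e6 := d_K1 K K1 hadj w y
    have hKrow := h ((K:ℕ)) y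
    have hK1row := h ((K:ℕ)+1) y
    have e7 := d_mul_adj_ne K K1 hadj w ((K:ℕ)+1) y (by omega)
    have hpre : dpre u ((K:ℕ)) y ≤ dpre w ((K:ℕ)) y := by
      have := dpre_mono h ((K:ℕ)) y
      rwa [dpre_mul_adj K K1 hadj w y] at this
    split_ifs at * <;> omega
  · rw [d_mul_adj_ne K K1 hadj u x y hx]
    have := h x y
    rwa [d_mul_adj_ne K K1 hadj w x y hx] at this

end Adjacent
end BW

-- ===================== Part 7: le-level lifting, sigma action =====================
namespace BW
variable {N : ℕ}
open Equiv Finset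

lemma le_inv_iff {u v : Perm (Fin N)} : bruhatLE' u v ↔ bruhatLE' u⁻¹ v⁻¹ :=
  ⟨le_inv, fun h => by simpa using le_inv h⟩

section Adjacent
variable (K K1 : Fin N)

lemma leP1 (hadj : (K1:ℕ) = (K:ℕ) + 1) {u w : Perm (Fin N)} (hdw : (w K1 : ℕ) < (w K : ℕ))
    (h : bruhatLE' u w) : bruhatLE' (u * Equiv.swap K K1) w :=
  le_iff_crit.mpr (P1 K K1 hadj hdw (le_iff_crit.mp h))

lemma leP2 (hadj : (K1:ℕ) = (K:ℕ) + 1) {u w : Perm (Fin N)} (hdw : (w K1 : ℕ) < (w K : ℕ))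
    (hdu : (u K1 : ℕ) < (u K : ℕ)) (h : bruhatLE' u w) :
    bruhatLE' (u * Equiv.swap K K1) (w * Equiv.swap K K1) :=
  le_iff_crit.mpr (P2 K K1 hadj hdw hdu (le_iff_crit.mp h))

lemma leP3 (hadj : (K1:ℕ) = (K:ℕ) + 1) {u w : Perm (Fin N)} (hdw : (w K1 : ℕ) < (w K : ℕ))
    (hdu : (u K : ℕ) < (u K1 : ℕ)) (h : bruhatLE' u w) :
    bruhatLE' u (w * Equiv.swap K K1) :=
  le_iff_crit.mpr (P3 K K1 hadj hdw hdu (le_iff_crit.mp h))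

lemma leP4 (hadj : (K1:ℕ) = (K:ℕ) + 1) {u w : Perm (Fin N)} (hdw : (w K1 : ℕ) < (w K : ℕ))
    (hdu : (u K : ℕ) < (u K1 : ℕ)) (h : bruhatLE' u (w * Equiv.swap K K1)) :
    bruhatLE' (u * Equiv.swap K K1) w :=
  le_iff_crit.mpr (P4 K K1 hadj hdw hdu (le_iff_crit.mp h))

lemma inv_mul_swap (u : Perm (Fin N)) : (u⁻¹ * Equiv.swap K K1)⁻¹ = Equiv.swap K K1 * u := by
  rw [mul_inv_rev, Equiv.swap_inv, inv_inv]

lemma leQ1 (hadj : (K1:ℕ) = (K:ℕ) + 1) {u w : Perm (Fin N)} (hdw : (w⁻¹ K1 : ℕ) < (w⁻¹ K : ℕ))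
    (h : bruhatLE' u w) : bruhatLE' (Equiv.swap K K1 * u) w := by
  have h2 := leP1 K K1 hadj (u := u⁻¹) (w := w⁻¹) hdw (le_inv h)
  have h3 := le_inv h2
  rwa [inv_mul_swap, inv_inv] at h3

lemma leQ2 (hadj : (K1:ℕ) = (K:ℕ) + 1) {u w : Perm (Fin N)} (hdw : (w⁻¹ K1 : ℕ) < (w⁻¹ K : ℕ))
    (hdu : (u⁻¹ K1 : ℕ) < (u⁻¹ K : ℕ)) (h : bruhatLE' u w) :
    bruhatLE' (Equiv.swap K K1 * u) (Equiv.swap K K1 * w) := by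
  have h2 := leP2 K K1 hadj (u := u⁻¹) (w := w⁻¹) hdw hdu (le_inv h)
  have h3 := le_inv h2
  rwa [inv_mul_swap, inv_mul_swap] at h3

lemma leQ3 (hadj : (K1:ℕ) = (K:ℕ) + 1) {u w : Perm (Fin N)} (hdw : (w⁻¹ K1 : ℕ) < (w⁻¹ K : ℕ))
    (hdu : (u⁻¹ K : ℕ) < (u⁻¹ K1 : ℕ)) (h : bruhatLE' u w) :
    bruhatLE' u (Equiv.swap K K1 * w) := by
  have h2 := leP3 K K1 hadj (u := u⁻¹) (w := w⁻¹) hdw hdu (le_inv h)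
  have h3 := le_inv h2
  rwa [inv_mul_swap, inv_inv] at h3

lemma len_adj_left_desc (hadj : (K1:ℕ) = (K:ℕ) + 1) (z : Perm (Fin N))
    (h : (z⁻¹ K1 : ℕ) < (z⁻¹ K : ℕ)) : len (Equiv.swap K K1 * z) + 1 = len z := by
  have h1 : len (Equiv.swap K K1 * z) = len (z⁻¹ * Equiv.swap K K1) := by
    rw [← len_inv (Equiv.swap K K1 * z), mul_inv_rev, Equiv.swap_inv]
  rw [h1, len_mul_adj_desc z⁻¹ K K1 hadj (Fin.lt_iff_val_lt_val.mpr h), len_inv]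

lemma len_adj_left_asc (hadj : (K1:ℕ) = (K:ℕ) + 1) (z : Perm (Fin N))
    (h : (z⁻¹ K : ℕ) < (z⁻¹ K1 : ℕ)) : len (Equiv.swap K K1 * z) = len z + 1 := by
  have h1 : len (Equiv.swap K K1 * z) = len (z⁻¹ * Equiv.swap K K1) := by
    rw [← len_inv (Equiv.swap K K1 * z), mul_inv_rev, Equiv.swap_inv]
  rw [h1, len_mul_adj_asc z⁻¹ K K1 hadj (Fin.lt_iff_val_lt_val.mpr h), len_inv]

/-- the sigma action on twisted involutions (θ = id here) -/
noncomputable def sig (x : Perm (Fin N)) : Perm (Fin N) := by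
  classical
  exact if Equiv.swap K K1 * x * Equiv.swap K K1 = x then x * Equiv.swap K K1
    else Equiv.swap K K1 * x * Equiv.swap K K1

lemma comm_iff (x : Perm (Fin N)) (hadj : (K1:ℕ) = (K:ℕ) + 1) :
    Equiv.swap K K1 * x * Equiv.swap K K1 = x
      ↔ ((x K = K ∧ x K1 = K1) ∨ (x K = K1 ∧ x K1 = K)) := by
  have hne := adjKne K K1 hadj
  constructor
  · intro h
    have hK : Equiv.swap K K1 (x (Equiv.swap K K1 K)) = x K := by
      conv_rhs => rw [← h]
      simp [Equiv.Perm.mul_apply]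
    have hK1 : Equiv.swap K K1 (x (Equiv.swap K K1 K1)) = x K1 := by
      conv_rhs => rw [← h]
      simp [Equiv.Perm.mul_apply]
    rw [Equiv.swap_apply_left] at hK
    rw [Equiv.swap_apply_right] at hK1
    -- hK : s (x K1) = x K, hK1 : s (x K) = x K1
    by_cases h1 : x K1 = K
    · right
      constructor
      · rw [← hK, h1, Equiv.swap_apply_left]
      · exact h1
    · by_cases h2 : x K1 = K1
      · left
        refine ⟨?_, h2⟩
        rw [← hK, h2, Equiv.swap_apply_right]
      · exfalso
        rw [Equiv.swap_apply_of_ne_of_ne h1 h2] at hK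
        exact hne (x.injective hK.symm ▸ rfl)
  · intro h
    apply Equiv.ext
    intro m
    simp only [Equiv.Perm.mul_apply]
    rcases eq_or_ne m K with rfl | hmK
    · rw [Equiv.swap_apply_left]
      rcases h with ⟨h1, h2⟩ | ⟨h1, h2⟩
      · rw [h2, Equiv.swap_apply_right, h1]
      · rw [h2, Equiv.swap_apply_left, h1]
    · rcases eq_or_ne m K1 with rfl | hmK1
      · rw [Equiv.swap_apply_right]
        rcases h with ⟨h1, h2⟩ | ⟨h1, h2⟩
        · rw [h1, Equiv.swap_apply_left, h2]
        · rw [h1, Equiv.swap_apply_right, h2]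
      · rw [Equiv.swap_apply_of_ne_of_ne hmK hmK1]
        rcases h with ⟨h1, h2⟩ | ⟨h1, h2⟩
        · apply Equiv.swap_apply_of_ne_of_ne
          · intro e; exact hmK (x.injective (e.trans h1.symm))
          · intro e; exact hmK1 (x.injective (e.trans h2.symm))
        · apply Equiv.swap_apply_of_ne_of_ne
          · intro e; exact hmK1 (x.injective (e.trans h2.symm))
          · intro e; exact hmK (x.injective (e.trans h1.symm))

lemma sig_sig (x : Perm (Fin N)) : sig K K1 (sig K K1 x) = x := by
  classical
  unfold sig
  by_cases h : Equiv.swap K K1 * x * Equiv.swap K K1 = x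
  · rw [if_pos h]
    have hcomm : Equiv.swap K K1 * x = x * Equiv.swap K K1 := by
      calc Equiv.swap K K1 * x = (Equiv.swap K K1 * x * Equiv.swap K K1) * Equiv.swap K K1 := by
            rw [mul_assoc, Equiv.swap_mul_self, mul_one]
        _ = x * Equiv.swap K K1 := by rw [h]
    have h2 : Equiv.swap K K1 * (x * Equiv.swap K K1) * Equiv.swap K K1 = x * Equiv.swap K K1 := by
      rw [← mul_assoc, hcomm]
      rw [mul_assoc (x * Equiv.swap K K1), Equiv.swap_mul_self, mul_one]
    rw [if_pos h2, mul_assoc, Equiv.swap_mul_self, mul_one]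
  · rw [if_neg h]
    have h2 : ¬(Equiv.swap K K1 * (Equiv.swap K K1 * x * Equiv.swap K K1) * Equiv.swap K K1
        = Equiv.swap K K1 * x * Equiv.swap K K1) := by
      intro hcon
      apply h
      have : Equiv.swap K K1 * (Equiv.swap K K1 * x * Equiv.swap K K1) * Equiv.swap K K1 = x := by
        rw [show Equiv.swap K K1 * (Equiv.swap K K1 * x * Equiv.swap K K1) * Equiv.swap K K1
          = (Equiv.swap K K1 * Equiv.swap K K1) * x * (Equiv.swap K K1 * Equiv.swap K K1) by group,
          Equiv.swap_mul_self, one_mul, mul_one]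
      rw [this] at hcon
      exact hcon.symm
    rw [if_neg h2]
    rw [show Equiv.swap K K1 * (Equiv.swap K K1 * x * Equiv.swap K K1) * Equiv.swap K K1
      = (Equiv.swap K K1 * Equiv.swap K K1) * x * (Equiv.swap K K1 * Equiv.swap K K1) by group,
      Equiv.swap_mul_self, one_mul, mul_one]

lemma sig_invol (x : Perm (Fin N)) (hx : x * x = 1) : sig K K1 x * sig K K1 x = 1 := by
  classical
  unfold sig
  by_cases h : Equiv.swap K K1 * x * Equiv.swap K K1 = x
  · rw [if_pos h]
    have hcomm : Equiv.swap K K1 * x = x * Equiv.swap K K1 := by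
      calc Equiv.swap K K1 * x = (Equiv.swap K K1 * x * Equiv.swap K K1) * Equiv.swap K K1 := by
            rw [mul_assoc, Equiv.swap_mul_self, mul_one]
        _ = x * Equiv.swap K K1 := by rw [h]
    calc x * Equiv.swap K K1 * (x * Equiv.swap K K1)
        = x * (Equiv.swap K K1 * x) * Equiv.swap K K1 := by group
      _ = x * (x * Equiv.swap K K1) * Equiv.swap K K1 := by rw [hcomm]
      _ = (x * x) * (Equiv.swap K K1 * Equiv.swap K K1) := by group
      _ = 1 := by rw [hx, Equiv.swap_mul_self, one_mul]
  · rw [if_neg h]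
    calc Equiv.swap K K1 * x * Equiv.swap K K1 * (Equiv.swap K K1 * x * Equiv.swap K K1)
        = Equiv.swap K K1 * x * (Equiv.swap K K1 * Equiv.swap K K1) * x * Equiv.swap K K1 := by group
      _ = Equiv.swap K K1 * (x * x) * Equiv.swap K K1 := by rw [Equiv.swap_mul_self]; group
      _ = 1 := by rw [hx, mul_one, Equiv.swap_mul_self]

end Adjacent
end BW

-- ===================== Part 7b: sigma length & order =====================
namespace BW
variable {N : ℕ}
open Equiv Finset

lemma invol_apply {x : Perm (Fin N)} (hx : x * x = 1) (m : Fin N) : x (x m) = m := by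
  have := Equiv.ext_iff.mp hx m
  simpa [Equiv.Perm.mul_apply] using this

lemma invol_inv {x : Perm (Fin N)} (hx : x * x = 1) : x⁻¹ = x :=
  inv_eq_of_mul_eq_one_right hx

section Adjacent
variable (K K1 : Fin N)

lemma ncomm_facts (hadj : (K1:ℕ) = (K:ℕ) + 1) {x : Perm (Fin N)} (hx : x * x = 1)
    (hn : ¬(Equiv.swap K K1 * x * Equiv.swap K K1 = x)) :
    (x K : ℕ) ≠ (K1:ℕ) ∧ (x K1 : ℕ) ≠ (K:ℕ) ∧
      ¬((x K : ℕ) = (K:ℕ) ∧ (x K1 : ℕ) = (K1:ℕ)) := by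
  rw [comm_iff K K1 x hadj] at hn
  push_neg at hn
  have hiff : x K = K1 ↔ x K1 = K := by
    constructor
    · intro h; rw [← h, invol_apply hx]
    · intro h; rw [← h, invol_apply hx]
  refine ⟨?_, ?_, ?_⟩
  · intro e
    have e' : x K = K1 := Fin.ext e
    exact (hn.2 e' (hiff.mp e')).elim
  · intro e
    have e' : x K1 = K := Fin.ext e
    exact (hn.2 (hiff.mpr e') e').elim
  · intro ⟨e1, e2⟩
    exact (hn.1 (Fin.ext e1) (Fin.ext e2)).elim

lemma sval_order_iff (hadj : (K1:ℕ) = (K:ℕ) + 1) {x : Perm (Fin N)} (hx : x * x = 1)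
    (hn : ¬(Equiv.swap K K1 * x * Equiv.swap K K1 = x)) :
    (((Equiv.swap K K1) (x K) : ℕ) < ((Equiv.swap K K1) (x K1) : ℕ))
      ↔ ((x K : ℕ) < (x K1 : ℕ)) := by
  obtain ⟨f1, f2, f3⟩ := ncomm_facts K K1 hadj hx hn
  have hne := adjKne K K1 hadj
  have hvne : (x K : ℕ) ≠ (x K1 : ℕ) := fun e => hne (x.injective (Fin.ext e))
  rw [swap_val K K1 hne, swap_val K K1 hne]
  have hK1v : (K1:ℕ) = (K:ℕ) + 1 := hadj
  split_ifs <;> omega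

lemma mul_swap_inv_of_invol {x : Perm (Fin N)} (hx : x * x = 1) :
    (x * Equiv.swap K K1)⁻¹ = Equiv.swap K K1 * x := by
  rw [mul_inv_rev, Equiv.swap_inv, invol_inv hx]

lemma mul_swap_apply_K (x : Perm (Fin N)) : (x * Equiv.swap K K1) K = x K1 := by
  rw [Equiv.Perm.mul_apply, Equiv.swap_apply_left]

lemma mul_swap_apply_K1 (x : Perm (Fin N)) : (x * Equiv.swap K K1) K1 = x K := by
  rw [Equiv.Perm.mul_apply, Equiv.swap_apply_right]

lemma swap_mul_apply (x : Perm (Fin N)) (m : Fin N) :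
    (Equiv.swap K K1 * x) m = Equiv.swap K K1 (x m) := rfl

lemma sig_eq_comm {x : Perm (Fin N)} (h : Equiv.swap K K1 * x * Equiv.swap K K1 = x) :
    sig K K1 x = x * Equiv.swap K K1 := by
  unfold sig; rw [if_pos h]

lemma sig_eq_ncomm {x : Perm (Fin N)} (h : ¬(Equiv.swap K K1 * x * Equiv.swap K K1 = x)) :
    sig K K1 x = Equiv.swap K K1 * x * Equiv.swap K K1 := by
  unfold sig; rw [if_neg h]

lemma sxs_eq (x : Perm (Fin N)) :
    Equiv.swap K K1 * x * Equiv.swap K K1 = Equiv.swap K K1 * (x * Equiv.swap K K1) := by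
  group

-- descent case: length drops
lemma Ldesc_xs (hadj : (K1:ℕ) = (K:ℕ) + 1) {x : Perm (Fin N)} (hx : x * x = 1)
    (h : ¬(Equiv.swap K K1 * x * Equiv.swap K K1 = x)) (hd : (x K1 : ℕ) < (x K : ℕ)) :
    (((x * Equiv.swap K K1)⁻¹ : Perm (Fin N)) K1 : ℕ)
      < (((x * Equiv.swap K K1)⁻¹ : Perm (Fin N)) K : ℕ) := by
  rw [mul_swap_inv_of_invol K K1 hx]
  rw [swap_mul_apply, swap_mul_apply]
  have hne2 : ((Equiv.swap K K1) (x K1) : ℕ) ≠ ((Equiv.swap K K1) (x K) : ℕ) := by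
    intro e
    have e2 : x K1 = x K := (Equiv.swap K K1).injective (Fin.ext e)
    exact (adjKne K K1 hadj) (x.injective e2).symm
  have hnot : ¬(((Equiv.swap K K1) (x K) : ℕ) < ((Equiv.swap K K1) (x K1) : ℕ)) := by
    rw [sval_order_iff K K1 hadj hx h]; omega
  omega

lemma len_sig_desc (hadj : (K1:ℕ) = (K:ℕ) + 1) {x : Perm (Fin N)} (hx : x * x = 1)
    (hd : (x K1 : ℕ) < (x K : ℕ)) : len (sig K K1 x) < len x := by
  have hlen1 : len (x * Equiv.swap K K1) + 1 = len x :=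
    len_mul_adj_desc x K K1 hadj (Fin.lt_iff_val_lt_val.mpr hd)
  by_cases h : Equiv.swap K K1 * x * Equiv.swap K K1 = x
  · rw [sig_eq_comm K K1 h]; omega
  · rw [sig_eq_ncomm K K1 h, sxs_eq]
    have := len_adj_left_desc K K1 hadj (x * Equiv.swap K K1) (Ldesc_xs K K1 hadj hx h hd)
    omega

lemma le_sig_desc (hadj : (K1:ℕ) = (K:ℕ) + 1) {x : Perm (Fin N)} (hx : x * x = 1)
    (hd : (x K1 : ℕ) < (x K : ℕ)) : bruhatLE' (sig K K1 x) x := by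
  have hlen1 : len (x * Equiv.swap K K1) + 1 = len x :=
    len_mul_adj_desc x K K1 hadj (Fin.lt_iff_val_lt_val.mpr hd)
  have hstep : bruhatLE' (x * Equiv.swap K K1) x := by
    have h2 : bruhatLE' (x * Equiv.swap K K1) ((x * Equiv.swap K K1) * Equiv.swap K K1) := by
      apply le_step ⟨K, K1, adjKne K K1 hadj, rfl⟩
      rw [mul_assoc, Equiv.swap_mul_self, mul_one]
      omega
    rwa [mul_assoc, Equiv.swap_mul_self, mul_one] at h2
  by_cases h : Equiv.swap K K1 * x * Equiv.swap K K1 = x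
  · rw [sig_eq_comm K K1 h]; exact hstep
  · rw [sig_eq_ncomm K K1 h, sxs_eq]
    have hlen2 := len_adj_left_desc K K1 hadj (x * Equiv.swap K K1) (Ldesc_xs K K1 hadj hx h hd)
    have hstep2 : bruhatLE' (Equiv.swap K K1 * (x * Equiv.swap K K1)) (x * Equiv.swap K K1) := by
      apply le_step_left ⟨K, K1, adjKne K K1 hadj, rfl⟩
      omega
    exact le_trans' hstep2 hstep

-- ascent case
lemma len_sig_asc (hadj : (K1:ℕ) = (K:ℕ) + 1) {x : Perm (Fin N)} (hx : x * x = 1)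
    (ha : (x K : ℕ) < (x K1 : ℕ)) : len x < len (sig K K1 x) := by
  have hlen1 : len (x * Equiv.swap K K1) = len x + 1 :=
    len_mul_adj_asc x K K1 hadj (Fin.lt_iff_val_lt_val.mpr ha)
  by_cases h : Equiv.swap K K1 * x * Equiv.swap K K1 = x
  · rw [sig_eq_comm K K1 h]; omega
  · rw [sig_eq_ncomm K K1 h, sxs_eq]
    have hL : (((x * Equiv.swap K K1)⁻¹ : Perm (Fin N)) K : ℕ)
        < (((x * Equiv.swap K K1)⁻¹ : Perm (Fin N)) K1 : ℕ) := by
      rw [mul_swap_inv_of_invol K K1 hx]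
      rw [swap_mul_apply, swap_mul_apply]
      exact (sval_order_iff K K1 hadj hx h).mpr ha
    have := len_adj_left_asc K K1 hadj (x * Equiv.swap K K1) hL
    omega

lemma le_sig_asc (hadj : (K1:ℕ) = (K:ℕ) + 1) {x : Perm (Fin N)} (hx : x * x = 1)
    (ha : (x K : ℕ) < (x K1 : ℕ)) : bruhatLE' x (sig K K1 x) := by
  have hsig2 := sig_sig K K1 x
  have hinv := sig_invol K K1 x hx
  have hd : ((sig K K1 x) K1 : ℕ) < ((sig K K1 x) K : ℕ) := by
    by_cases h : Equiv.swap K K1 * x * Equiv.swap K K1 = x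
    · rw [sig_eq_comm K K1 h, mul_swap_apply_K, mul_swap_apply_K1]
      exact ha
    · rw [sig_eq_ncomm K K1 h, sxs_eq, swap_mul_apply, swap_mul_apply,
        mul_swap_apply_K, mul_swap_apply_K1]
      exact (sval_order_iff K K1 hadj hx h).mpr ha
  have := le_sig_desc K K1 hadj hinv hd
  rwa [hsig2] at this

lemma sig_desc_of_asc (hadj : (K1:ℕ) = (K:ℕ) + 1) {x : Perm (Fin N)} (hx : x * x = 1)
    (ha : (x K : ℕ) < (x K1 : ℕ)) : ((sig K K1 x) K1 : ℕ) < ((sig K K1 x) K : ℕ) := by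
  by_cases h : Equiv.swap K K1 * x * Equiv.swap K K1 = x
  · rw [sig_eq_comm K K1 h, mul_swap_apply_K, mul_swap_apply_K1]
    exact ha
  · rw [sig_eq_ncomm K K1 h, sxs_eq, swap_mul_apply, swap_mul_apply,
      mul_swap_apply_K, mul_swap_apply_K1]
    exact (sval_order_iff K K1 hadj hx h).mpr ha

end Adjacent
end BW

-- ===================== Part 8: sigma lifting lemmas =====================
namespace BW
variable {N : ℕ}
open Equiv Finset

section Adjacent
variable (K K1 : Fin N)

lemma Bbig (hadj : (K1:ℕ) = (K:ℕ) + 1) {x y : Perm (Fin N)} (hx : x * x = 1) (hy : y * y = 1)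
    (hdy : (y K1 : ℕ) < (y K : ℕ)) (h : bruhatLE' x (sig K K1 y)) :
    bruhatLE' (sig K K1 x) y := by
  have hystep : bruhatLE' (sig K K1 y) y := le_sig_desc K K1 hadj hy hdy
  have hxK : (x K : ℕ) ≠ (x K1 : ℕ) := fun e => (adjKne K K1 hadj) (x.injective (Fin.ext e))
  rcases lt_or_gt_of_ne hxK with hxa | hxd
  · -- x ascent
    have hxys : bruhatLE' x (y * Equiv.swap K K1) := by
      by_cases hcy : Equiv.swap K K1 * y * Equiv.swap K K1 = y
      · rwa [sig_eq_comm K K1 hcy] at h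
      · rw [sig_eq_ncomm K K1 hcy, sxs_eq] at h
        have hlen2 := len_adj_left_desc K K1 hadj (y * Equiv.swap K K1)
          (Ldesc_xs K K1 hadj hy hcy hdy)
        exact le_trans' h (le_step_left ⟨K, K1, adjKne K K1 hadj, rfl⟩ (by omega))
    by_cases hcx : Equiv.swap K K1 * x * Equiv.swap K K1 = x
    · rw [sig_eq_comm K K1 hcx]
      exact leP4 K K1 hadj hdy hxa hxys
    · rw [sig_eq_ncomm K K1 hcx, sxs_eq]
      have h1 : bruhatLE' (x * Equiv.swap K K1) y := leP4 K K1 hadj hdy hxa hxys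
      have hLy : (y⁻¹ K1 : ℕ) < (y⁻¹ K : ℕ) := by rw [invol_inv hy]; exact hdy
      exact leQ1 K K1 hadj hLy h1
  · -- x descent : trivial chain
    exact le_trans' (le_sig_desc K K1 hadj hx hxd) (le_trans' h hystep)

lemma Abig (hadj : (K1:ℕ) = (K:ℕ) + 1) {x y : Perm (Fin N)} (hx : x * x = 1) (hy : y * y = 1)
    (hdy : (y K1 : ℕ) < (y K : ℕ)) (hxy : bruhatLE' x y)
    (hnot : ¬ bruhatLE' x (sig K K1 y)) :
    bruhatLE' (sig K K1 x) (sig K K1 y) := by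
  have hxK : (x K : ℕ) ≠ (x K1 : ℕ) := fun e => (adjKne K K1 hadj) (x.injective (Fin.ext e))
  rcases lt_or_gt_of_ne hxK with hxa | hxd
  · -- x ascent: contradiction with hnot
    exfalso
    have h1 : bruhatLE' x (y * Equiv.swap K K1) := leP3 K K1 hadj hdy hxa hxy
    by_cases hcy : Equiv.swap K K1 * y * Equiv.swap K K1 = y
    · exact hnot (by rwa [sig_eq_comm K K1 hcy])
    · apply hnot
      rw [sig_eq_ncomm K K1 hcy, sxs_eq]
      refine leQ3 K K1 hadj (Ldesc_xs K K1 hadj hy hcy hdy) ?_ h1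
      rw [invol_inv hx]; exact hxa
  · -- x descent
    have h2 : bruhatLE' (x * Equiv.swap K K1) (y * Equiv.swap K K1) :=
      leP2 K K1 hadj hdy hxd hxy
    by_cases hcy : Equiv.swap K K1 * y * Equiv.swap K K1 = y
    · rw [sig_eq_comm K K1 hcy]
      by_cases hcx : Equiv.swap K K1 * x * Equiv.swap K K1 = x
      · rw [sig_eq_comm K K1 hcx]; exact h2
      · rw [sig_eq_ncomm K K1 hcx, sxs_eq]
        have hlen2 := len_adj_left_desc K K1 hadj (x * Equiv.swap K K1)
          (Ldesc_xs K K1 hadj hx hcx hxd)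
        exact le_trans' (le_step_left ⟨K, K1, adjKne K K1 hadj, rfl⟩ (by omega)) h2
    · rw [sig_eq_ncomm K K1 hcy, sxs_eq]
      by_cases hcx : Equiv.swap K K1 * x * Equiv.swap K K1 = x
      · rw [sig_eq_comm K K1 hcx]
        refine leQ3 K K1 hadj (Ldesc_xs K K1 hadj hy hcy hdy) ?_ h2
        rw [mul_swap_inv_of_invol K K1 hx, swap_mul_apply, swap_mul_apply]
        rcases (comm_iff K K1 x hadj).mp hcx with ⟨e1, e2⟩ | ⟨e1, e2⟩
        · exfalso; rw [e1, e2] at hxd; omega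
        · rw [e1, e2, Equiv.swap_apply_right, Equiv.swap_apply_left]
          omega
      · rw [sig_eq_ncomm K K1 hcx, sxs_eq]
        exact leQ2 K K1 hadj (Ldesc_xs K K1 hadj hy hcy hdy)
          (Ldesc_xs K K1 hadj hx hcx hxd) h2

lemma Dbig (hadj : (K1:ℕ) = (K:ℕ) + 1) {x z : Perm (Fin N)} (hx : x * x = 1) (hz : z * z = 1)
    (hxa : (x K : ℕ) < (x K1 : ℕ)) (hxz : bruhatLE' x z)
    (hnot : ¬ bruhatLE' (sig K K1 x) z) :
    bruhatLE' (sig K K1 x) (sig K K1 z) := by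
  have hzK : (z K : ℕ) ≠ (z K1 : ℕ) := fun e => (adjKne K K1 hadj) (z.injective (Fin.ext e))
  rcases lt_or_gt_of_ne hzK with hza | hzd
  · refine Bbig K K1 hadj hx (sig_invol K K1 z hz) (sig_desc_of_asc K K1 hadj hz hza) ?_
    rw [sig_sig]; exact hxz
  · by_cases h2 : bruhatLE' x (sig K K1 z)
    · exact absurd (Bbig K K1 hadj hx hz hzd h2) hnot
    · exact Abig K K1 hadj hx hz hzd hxz h2

end Adjacent
end BW

-- ===================== Part 9a: descent existence, misc =====================
namespace BW
variable {N : ℕ}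
open Equiv Finset

lemma exists_descent {a : Perm (Fin N)} (ha : a ≠ 1) :
    ∃ (K K1 : Fin N), (K1:ℕ) = (K:ℕ) + 1 ∧ (a K1 : ℕ) < (a K : ℕ) := by
  classical
  by_contra hno
  push_neg at hno
  have hmono : ∀ (t : ℕ) (h : t + 1 < N), (a ⟨t, by omega⟩ : ℕ) < (a ⟨t+1, h⟩ : ℕ) := by
    intro t h
    have h1 := hno ⟨t, by omega⟩ ⟨t+1, h⟩ rfl
    have h2 : a ⟨t, by omega⟩ ≠ a ⟨t+1, h⟩ := fun e => by
      have := a.injective e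
      have := congrArg Fin.val this
      simp at this
    have h3 : ((a ⟨t, by omega⟩ : Fin N) : ℕ) ≠ ((a ⟨t+1, h⟩ : Fin N) : ℕ) :=
      fun e => h2 (Fin.ext e)
    omega
  have hge : ∀ (t : ℕ) (h : t < N), t ≤ (a ⟨t, h⟩ : ℕ) := by
    intro t
    induction t with
    | zero => intro h; omega
    | succ t iht =>
      intro h
      have h1 := iht (by omega)
      have h2 := hmono t h
      omega
  have hge' : ∀ m : Fin N, (m:ℕ) ≤ (a m : ℕ) := by
    intro m
    have := hge (m:ℕ) m.isLt
    convert this using 3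
  have hsum : ∑ m : Fin N, ((a m : Fin N) : ℕ) = ∑ m : Fin N, (m : ℕ) :=
    Fintype.sum_equiv a (fun m => ((a m : Fin N) : ℕ)) (fun m => (m : ℕ)) (fun m => rfl)
  have : ∃ m : Fin N, a m ≠ m := by
    by_contra hall
    push_neg at hall
    exact ha (Equiv.ext hall)
  obtain ⟨m0, hm0⟩ := this
  have hstrict : (m0 : ℕ) < (a m0 : ℕ) := by
    have := hge' m0
    rcases Nat.lt_or_ge (m0:ℕ) ((a m0 : Fin N):ℕ) with h | h
    · exact h
    · exact absurd (Fin.ext (by omega)) (fun e => hm0 e.symm)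
  have hlt : ∑ m : Fin N, (m : ℕ) < ∑ m : Fin N, ((a m : Fin N) : ℕ) :=
    Finset.sum_lt_sum (fun i _ => hge' i) ⟨m0, Finset.mem_univ m0, hstrict⟩
  omega

lemma len_pos_of_desc {a : Perm (Fin N)} {K K1 : Fin N} (hadj : (K1:ℕ) = (K:ℕ) + 1)
    (hd : (a K1 : ℕ) < (a K : ℕ)) : 0 < len a := by
  apply Finset.card_pos.mpr
  refine ⟨(K, K1), ?_⟩
  simp only [Finset.mem_filter, Finset.mem_univ, true_and]
  exact ⟨Fin.lt_iff_val_lt_val.mpr (by omega), Fin.lt_iff_val_lt_val.mpr hd⟩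

end BW

-- ===================== Part 9b: block structure =====================
namespace BW
variable {N : ℕ}
open Equiv Finset

lemma block_structure {a : Perm (Fin N)} (ha : a * a = 1) (hfpf : ∀ m, a m ≠ m)
    (hcomm : ∀ (K K1 : Fin N), (K1:ℕ) = (K:ℕ) + 1 → (a K1 : ℕ) < (a K : ℕ) →
      Equiv.swap K K1 * a * Equiv.swap K K1 = a) :
    ∀ t : ℕ, ∀ m : Fin N, (m:ℕ) = 2*t → ((a m : Fin N) : ℕ) = 2*t + 1 := by
  intro t
  induction t using Nat.strong_induction_on with
  | _ t iht =>
  intro m hm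
  have hpref : ∀ m' : Fin N, (m':ℕ) < 2*t → ((a m' : Fin N) : ℕ) < 2*t := by
    intro m' hm'
    set x := (m':ℕ)/2 with hxdef
    have hx : (m':ℕ) = 2*x ∨ (m':ℕ) = 2*x+1 := by omega
    have hxt : x < t := by omega
    rcases hx with hx | hx
    · have := iht x hxt m' hx
      omega
    · have h2x : (2*x : ℕ) < N := by
        have := m'.isLt
        omega
      have h1 := iht x hxt ⟨2*x, h2x⟩ rfl
      have h2 : a ⟨2*x, h2x⟩ = m' := Fin.ext (by rw [h1]; omega)
      have h3 : a m' = ⟨2*x, h2x⟩ := by rw [← h2, invol_apply ha]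
      rw [h3]
      simp only []
      omega
  have hvne : ((a m : Fin N) : ℕ) ≠ 2*t := by
    intro e
    exact hfpf m (Fin.ext (by omega))
  have hvgt : 2*t < ((a m : Fin N) : ℕ) := by
    rcases Nat.lt_or_ge ((a m : Fin N) : ℕ) (2*t) with h | h
    · exfalso
      have := hpref (a m) h
      rw [invol_apply ha] at this
      omega
    · omega
  by_contra hne2
  have hvgt2 : 2*t + 1 < ((a m : Fin N) : ℕ) := by omega
  set v := a m with hvdef
  have hKlt : (v:ℕ) - 1 < N := by have := v.isLt; omega
  set K : Fin N := ⟨(v:ℕ) - 1, hKlt⟩ with hKdef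
  have hadj : ((v : Fin N):ℕ) = (K:ℕ) + 1 := by
    simp only [hKdef]
    omega
  have haK1 : a v = m := invol_apply ha m
  have haKgt : 2*t < ((a K : Fin N) : ℕ) := by
    rcases Nat.lt_or_ge ((a K : Fin N) : ℕ) (2*t) with h | h
    · exfalso
      have := hpref (a K) h
      rw [invol_apply ha] at this
      simp only [hKdef] at this
      omega
    · rcases Nat.eq_or_lt_of_le h with h2 | h2
      · exfalso
        have he : a K = m := Fin.ext (by omega)
        have h4 : K = a m := by rw [← he, invol_apply ha]
        have h5 : K = v := by rw [hvdef]; exact h4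
        have h6 := congrArg Fin.val h5
        simp only [hKdef] at h6
        omega
      · omega
  have hdesc : ((a v : Fin N) : ℕ) < ((a K : Fin N) : ℕ) := by
    rw [haK1]
    omega
  have hc := hcomm K v hadj hdesc
  rcases (comm_iff K v a hadj).mp hc with h | h
  · have he : m = v := by rw [← haK1, h.2]
    have := congrArg Fin.val he
    omega
  · have he : m = K := by rw [← haK1, h.2]
    have h3 := congrArg Fin.val he
    simp only [hKdef] at h3
    omega

end BW

-- ===================== Part 9c: cover classification =====================
namespace BW
variable {N : ℕ}
open Equiv Finset

lemma sig_asc_of_desc (K K1 : Fin N) (hadj : (K1:ℕ) = (K:ℕ) + 1) {x : Perm (Fin N)}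
    (hx : x * x = 1) (hd : (x K1 : ℕ) < (x K : ℕ)) :
    ((sig K K1 x) K : ℕ) < ((sig K K1 x) K1 : ℕ) := by
  by_cases h : Equiv.swap K K1 * x * Equiv.swap K K1 = x
  · rw [sig_eq_comm K K1 h, mul_swap_apply_K, mul_swap_apply_K1]
    exact hd
  · rw [sig_eq_ncomm K K1 h, sxs_eq, swap_mul_apply, swap_mul_apply,
      mul_swap_apply_K, mul_swap_apply_K1]
    have hne2 : ((Equiv.swap K K1) (x K1) : ℕ) ≠ ((Equiv.swap K K1) (x K) : ℕ) := by
      intro e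
      have e2 : x K1 = x K := (Equiv.swap K K1).injective (Fin.ext e)
      exact (adjKne K K1 hadj) (x.injective e2).symm
    have hnot : ¬(((Equiv.swap K K1) (x K) : ℕ) < ((Equiv.swap K K1) (x K1) : ℕ)) := by
      rw [sval_order_iff K K1 hadj hx h]; omega
    omega

theorem cover_class : ∀ (L : ℕ) (a b : Perm (Fin N)), len a ≤ L →
    a * a = 1 → b * b = 1 → (∀ m, a m ≠ m) → (∃ f, b f = f) →
    bruhatLE' b a → b ≠ a →
    (∀ z, z * z = 1 → bruhatLE' b z → bruhatLE' z a → z = b ∨ z = a) →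
    ∃ i j : Fin N, (i:ℕ) < (j:ℕ) ∧ (∀ m : Fin N, b m = m ↔ (m = i ∨ m = j)) ∧
      a = b * Equiv.swap i j := by
  intro L
  induction L with
  | zero =>
    intro a b hL ha hb hfpf hbf hba hne hcov
    exfalso
    obtain ⟨f, hf⟩ := hbf
    have hane : a ≠ 1 := fun e => hfpf f (by rw [e]; rfl)
    obtain ⟨K, K1, hadj, hd⟩ := exists_descent hane
    have := len_pos_of_desc hadj hd
    omega
  | succ L ih =>
    intro a b hL ha hb hfpf hbf hba hne hcov
    classical
    by_cases hconj : ∃ (K K1 : Fin N), (K1:ℕ) = (K:ℕ) + 1 ∧ (a K1 : ℕ) < (a K : ℕ) ∧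
        ¬(Equiv.swap K K1 * a * Equiv.swap K K1 = a)
    · obtain ⟨K, K1, hadj, hdesc, hnc⟩ := hconj
      have hcinv := sig_invol K K1 a ha
      have hclen := len_sig_desc K K1 hadj ha hdesc
      have hca := le_sig_desc K K1 hadj ha hdesc
      have hcfpf : ∀ m, sig K K1 a m ≠ m := by
        intro m hm
        rw [sig_eq_ncomm K K1 hnc] at hm
        have h2 : Equiv.swap K K1 (a (Equiv.swap K K1 m)) = m := hm
        have h3 := congrArg (Equiv.swap K K1) h2
        rw [Equiv.swap_apply_self] at h3
        exact hfpf _ h3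
      have hnbc : ¬ bruhatLE' b (sig K K1 a) := by
        intro hbc
        rcases hcov _ hcinv hbc hca with he | he
        · obtain ⟨f, hf⟩ := hbf
          exact hcfpf f (by rw [he]; exact hf)
        · rw [he] at hclen; omega
      have hsb_le := Abig K K1 hadj hb ha hdesc hba hnbc
      have hbK : (b K : ℕ) ≠ (b K1 : ℕ) := fun e => (adjKne K K1 hadj) (b.injective (Fin.ext e))
      rcases lt_or_gt_of_ne hbK with hbasc | hbdesc
      · exfalso
        have h1 := le_sig_asc K K1 hadj hb hbasc
        have h2 := len_sig_asc K K1 hadj hb hbasc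
        have h3 : bruhatLE' (sig K K1 b) a := le_trans' hsb_le hca
        rcases hcov _ (sig_invol K K1 b hb) h1 h3 with he | he
        · rw [he] at h2; omega
        · have h4 := len_le_of_le hsb_le
          rw [he] at h4
          omega
      · have hsbinv := sig_invol K K1 b hb
        have hsblen := len_sig_desc K K1 hadj hb hbdesc
        have hcov2 : ∀ z, z * z = 1 → bruhatLE' (sig K K1 b) z → bruhatLE' z (sig K K1 a) →
            z = sig K K1 b ∨ z = sig K K1 a := by
          intro z hz h1 h2
          have hnbz : ¬ bruhatLE' b z := fun hbz => hnbc (le_trans' hbz h2)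
          have hD : bruhatLE' b (sig K K1 z) := by
            have hasc := sig_asc_of_desc K K1 hadj hb hbdesc
            have := Dbig K K1 hadj hsbinv hz hasc h1 (by rw [sig_sig]; exact hnbz)
            rwa [sig_sig] at this
          have hzA : bruhatLE' (sig K K1 z) a := Bbig K K1 hadj hz ha hdesc h2
          rcases hcov _ (sig_invol K K1 z hz) hD hzA with he | he
          · left; rw [← sig_sig K K1 z, he]
          · right; rw [← sig_sig K K1 z, he]
        have hsbfix : ∃ f', (sig K K1 b) f' = f' := by
          by_cases hcb2 : Equiv.swap K K1 * b * Equiv.swap K K1 = b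
          · rcases (comm_iff K K1 b hadj).mp hcb2 with ⟨e1, e2⟩ | ⟨e1, e2⟩
            · exfalso
              rw [e1, e2] at hbdesc
              omega
            · exact ⟨K, by rw [sig_eq_comm K K1 hcb2, mul_swap_apply_K, e2]⟩
          · obtain ⟨f, hf⟩ := hbf
            refine ⟨Equiv.swap K K1 f, ?_⟩
            rw [sig_eq_ncomm K K1 hcb2]
            show Equiv.swap K K1 (b (Equiv.swap K K1 (Equiv.swap K K1 f))) = Equiv.swap K K1 f
            rw [Equiv.swap_apply_self, hf]
        have hne2 : sig K K1 b ≠ sig K K1 a := by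
          intro e
          obtain ⟨f', hf'⟩ := hsbfix
          exact hcfpf f' (by rw [← e]; exact hf')
        obtain ⟨i, j, hij, hfixiff, heq⟩ :=
          ih (sig K K1 a) (sig K K1 b) (by omega) hcinv hsbinv hcfpf hsbfix hsb_le hne2 hcov2
        by_cases hcb2 : Equiv.swap K K1 * b * Equiv.swap K K1 = b
        · exfalso
          rcases (comm_iff K K1 b hadj).mp hcb2 with ⟨e1, e2⟩ | ⟨e1, e2⟩
          · rw [e1, e2] at hbdesc; omega
          · obtain ⟨f, hf⟩ := hbf
            have hfK : f ≠ K := by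
              intro e; rw [e] at hf
              exact (adjKne K K1 hadj) (hf.symm.trans e1)
            have hfK1 : f ≠ K1 := by
              intro e; rw [e] at hf
              exact (adjKne K K1 hadj) (e2.symm.trans hf)
            have hK : (sig K K1 b) K = K := by
              rw [sig_eq_comm K K1 hcb2, mul_swap_apply_K, e2]
            have hK1 : (sig K K1 b) K1 = K1 := by
              rw [sig_eq_comm K K1 hcb2, mul_swap_apply_K1, e1]
            have hfx : (sig K K1 b) f = f := by
              rw [sig_eq_comm K K1 hcb2, Equiv.Perm.mul_apply,
                Equiv.swap_apply_of_ne_of_ne hfK hfK1, hf]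
            have c1 := ((hfixiff K).mp hK).imp (congrArg Fin.val) (congrArg Fin.val)
            have c2 := ((hfixiff K1).mp hK1).imp (congrArg Fin.val) (congrArg Fin.val)
            have c3 := ((hfixiff f).mp hfx).imp (congrArg Fin.val) (congrArg Fin.val)
            have d1 : (f:ℕ) ≠ (K:ℕ) := fun e => hfK (Fin.ext e)
            have d2 : (f:ℕ) ≠ (K1:ℕ) := fun e => hfK1 (Fin.ext e)
            omega
        · -- b' = s b s : transport
          have e1 : a = Equiv.swap K K1 * (sig K K1 a) * Equiv.swap K K1 := by
            rw [sig_eq_ncomm K K1 hnc]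
            rw [show Equiv.swap K K1 * (Equiv.swap K K1 * a * Equiv.swap K K1) * Equiv.swap K K1
              = (Equiv.swap K K1 * Equiv.swap K K1) * a * (Equiv.swap K K1 * Equiv.swap K K1) by
                group, Equiv.swap_mul_self, one_mul, mul_one]
          rw [heq, sig_eq_ncomm K K1 hcb2] at e1
          have e2 : Equiv.swap K K1 * ((Equiv.swap K K1 * b * Equiv.swap K K1) * Equiv.swap i j)
                * Equiv.swap K K1
              = b * (Equiv.swap K K1 * Equiv.swap i j * Equiv.swap K K1) := by
            rw [show Equiv.swap K K1 * ((Equiv.swap K K1 * b * Equiv.swap K K1) * Equiv.swap i j)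
                * Equiv.swap K K1
              = (Equiv.swap K K1 * Equiv.swap K K1) * b
                * (Equiv.swap K K1 * Equiv.swap i j * Equiv.swap K K1) by group,
              Equiv.swap_mul_self, one_mul]
          have e3 : Equiv.swap K K1 * Equiv.swap i j * Equiv.swap K K1
              = Equiv.swap ((Equiv.swap K K1) i) ((Equiv.swap K K1) j) := by
            have h := (Equiv.swap_apply_apply (Equiv.swap K K1) i j).symm
            rwa [Equiv.swap_inv] at h
          rw [e2, e3] at e1
          -- fixed point characterization for b
          have hbfix : ∀ m : Fin N, b m = m ↔
              (m = (Equiv.swap K K1) i ∨ m = (Equiv.swap K K1) j) := by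
            intro m
            have hsig : (sig K K1 b) (Equiv.swap K K1 m) = Equiv.swap K K1 (b m) := by
              rw [sig_eq_ncomm K K1 hcb2]
              show Equiv.swap K K1 (b (Equiv.swap K K1 (Equiv.swap K K1 m)))
                = Equiv.swap K K1 (b m)
              rw [Equiv.swap_apply_self]
            constructor
            · intro h
              have h2 : (sig K K1 b) (Equiv.swap K K1 m) = Equiv.swap K K1 m := by
                rw [hsig, h]
              rcases (hfixiff _).mp h2 with he | he
              · left
                rw [← he, Equiv.swap_apply_self]
              · right
                rw [← he, Equiv.swap_apply_self]
            · intro h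
              have h2 : Equiv.swap K K1 m = i ∨ Equiv.swap K K1 m = j := by
                rcases h with rfl | rfl
                · left; rw [Equiv.swap_apply_self]
                · right; rw [Equiv.swap_apply_self]
              have h3 := (hfixiff _).mpr h2
              rw [hsig] at h3
              exact (Equiv.swap K K1).injective h3
          have hne3 : (Equiv.swap K K1) i ≠ (Equiv.swap K K1) j := by
            intro e
            have := (Equiv.swap K K1).injective e
            rw [this] at hij
            omega
          have hne3v : ((Equiv.swap K K1) i : ℕ) ≠ ((Equiv.swap K K1) j : ℕ) :=
            fun e => hne3 (Fin.ext e)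
          rcases lt_or_gt_of_ne hne3v with hlt | hgt
          · exact ⟨_, _, hlt, hbfix, e1⟩
          · refine ⟨(Equiv.swap K K1) j, (Equiv.swap K K1) i, hgt, ?_, ?_⟩
            · intro m
              rw [hbfix m]
              exact or_comm
            · rw [e1, Equiv.swap_comm]
    · -- all descents are commuting type : a is the standard pairing near the fixed block
      push_neg at hconj
      obtain ⟨f, hf⟩ := hbf
      have h2T : 2 * ((f:ℕ)/2) < N := by have := f.isLt; omega
      set T := (f:ℕ)/2 with hTdef
      set K : Fin N := ⟨2*T, h2T⟩ with hKdef
      have hval := block_structure ha hfpf hconj T K rfl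
      have h2T1 : 2*T+1 < N := by have := (a K).isLt; omega
      set K1 : Fin N := ⟨2*T+1, h2T1⟩ with hK1def
      have hadj : (K1:ℕ) = (K:ℕ) + 1 := rfl
      have haK : a K = K1 := Fin.ext hval
      have haK1 : a K1 = K := by rw [← haK, invol_apply ha]
      have hcrit := le_crit hba
      -- b stays in blocks
      have hd_a : ∀ t' : ℕ, 2*t'+1 < N → d a (2*t'+1) (2*t'+2) = 0 := by
        intro t' ht'
        unfold d
        rw [Finset.card_eq_zero]
        apply Finset.filter_false_of_mem
        intro m _
        rintro ⟨h1, h2⟩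
        set x := (m:ℕ)/2 with hxdef
        have hx : (m:ℕ) = 2*x ∨ (m:ℕ) = 2*x+1 := by omega
        rcases hx with hx | hx
        · have := block_structure ha hfpf hconj x m hx
          omega
        · have h2x : 2*x < N := by have := m.isLt; omega
          have hblk := block_structure ha hfpf hconj x ⟨2*x, h2x⟩ rfl
          have he : a ⟨2*x, h2x⟩ = m := Fin.ext (by rw [hblk]; omega)
          have : a m = ⟨2*x, h2x⟩ := by rw [← he, invol_apply ha]
          rw [this] at h2
          simp only [] at h2
          omega
      have hbmem : ∀ (m : Fin N) (t' : ℕ), 2*t'+1 < N → (m:ℕ) ≤ 2*t'+1 → (b m : ℕ) ≤ 2*t'+1 := by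
        intro m t' ht' hm
        by_contra hcon
        have h0 := hcrit (2*t'+1) (2*t'+2)
        rw [hd_a t' ht'] at h0
        have : m ∈ (Finset.univ.filter fun k : Fin N =>
            (k:ℕ) ≤ 2*t'+1 ∧ 2*t'+2 ≤ (b k : ℕ)) := by
          simp only [Finset.mem_filter, Finset.mem_univ, true_and]
          omega
        have := Finset.card_pos.mpr ⟨m, this⟩
        unfold d at h0
        omega
      have hblockb : ∀ m : Fin N, ((m:ℕ) = 2*T ∨ (m:ℕ) = 2*T+1) →
          ((b m : ℕ) = 2*T ∨ (b m : ℕ) = 2*T+1) := by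
        intro m hm
        have hup : (b m : ℕ) ≤ 2*T+1 := hbmem m T h2T1 (by omega)
        by_contra hcon
        push_neg at hcon
        have hlow : (b m : ℕ) < 2*T := by omega
        have hT1 : 1 ≤ T := by omega
        have h1 : (b (b m) : ℕ) ≤ 2*(T-1)+1 := by
          apply hbmem (b m) (T-1) (by omega)
          omega
        rw [invol_apply hb] at h1
        omega
      -- b fixes K and K1
      have hbKK1 : b K = K ∧ b K1 = K1 := by
        have hfval : (f:ℕ) = 2*T ∨ (f:ℕ) = 2*T+1 := by omega
        rcases hfval with hfval | hfval
        · have hfK : f = K := Fin.ext hfval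
          have h1 : b K = K := by rw [← hfK]; exact hf
          refine ⟨h1, ?_⟩
          rcases hblockb K1 (Or.inr rfl) with h2 | h2
          · exfalso
            have : b K1 = K := Fin.ext h2
            have := b.injective (h1.trans this.symm)
            rw [this] at hadj
            omega
          · exact Fin.ext h2
        · have hfK1 : f = K1 := Fin.ext hfval
          have h1 : b K1 = K1 := by rw [← hfK1]; exact hf
          refine ⟨?_, h1⟩
          rcases hblockb K (Or.inl rfl) with h2 | h2
          · exact Fin.ext h2
          · exfalso
            have : b K = K1 := Fin.ext h2
            have := b.injective (this.trans h1.symm)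
            rw [this] at hadj
            omega
      have hcomm_a : Equiv.swap K K1 * a * Equiv.swap K K1 = a :=
        (comm_iff K K1 a hadj).mpr (Or.inr ⟨haK, haK1⟩)
      have hdesca : (a K1 : ℕ) < (a K : ℕ) := by
        rw [haK, haK1]
        omega
      have hclen := len_sig_desc K K1 hadj ha hdesca
      have hca := le_sig_desc K K1 hadj ha hdesca
      have hcinv := sig_invol K K1 a ha
      have hceq : sig K K1 a = a * Equiv.swap K K1 := sig_eq_comm K K1 hcomm_a
      -- b ≤ c
      have hdb0 : d b (2*T) (2*T+1) = 0 := by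
        unfold d
        rw [Finset.card_eq_zero]
        apply Finset.filter_false_of_mem
        intro m _
        rintro ⟨h1, h2⟩
        rcases Nat.eq_or_lt_of_le h1 with he | hlt
        · have : m = K := Fin.ext (by omega)
          rw [this, hbKK1.1] at h2
          simp only [hKdef] at h2
          omega
        · have hT1 : 1 ≤ T := by omega
          have h3 : (b m : ℕ) ≤ 2*(T-1)+1 := hbmem m (T-1) (by omega) (by omega)
          omega
      have hbc : bruhatLE' b (sig K K1 a) := by
        rw [hceq]
        apply le_iff_crit.mpr
        intro x y
        have master := d_mul_swap a K K1 (adjKne K K1 hadj) x y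
        have hvK : (a K : ℕ) = 2*T+1 := hval
        have hvK1 : (a K1 : ℕ) = 2*T := by rw [haK1]
        by_cases hpt : x = 2*T ∧ y = 2*T+1
        · obtain ⟨rfl, rfl⟩ := hpt
          rw [hdb0]
          exact Nat.zero_le _
        · have h1 : d a x y ≤ d (a * Equiv.swap K K1) x y := by
            push_neg at hpt
            have hKv : (K:ℕ) = 2*T := rfl
            have hK1v : (K1:ℕ) = 2*T+1 := rfl
            split_ifs at master <;> omega
          exact le_trans (hcrit x y) h1
      -- cover forces b = sig a
      have hbeq : b = sig K K1 a := by
        rcases hcov _ hcinv hbc hca with he | he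
        · exact he.symm
        · rw [he] at hclen; omega
      have hfinal : a = b * Equiv.swap K K1 := by
        rw [hbeq, hceq, mul_assoc, Equiv.swap_mul_self, mul_one]
      refine ⟨K, K1, by omega, ?_, hfinal⟩
      intro m
      rw [hbeq, hceq]
      constructor
      · intro hm
        by_contra hcon
        push_neg at hcon
        obtain ⟨hmK, hmK1⟩ := hcon
        rw [Equiv.Perm.mul_apply, Equiv.swap_apply_of_ne_of_ne hmK hmK1] at hm
        exact hfpf m hm
      · rintro (rfl | rfl)
        · rw [mul_swap_apply_K, haK1]
        · rw [mul_swap_apply_K1, haK]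

end BW

-- ===================== Part 10: translation via w0 =====================
namespace BW
open Equiv Finset

lemma w0_mul_apply {N : ℕ} (x : Perm (Fin N)) (m : Fin N) : (w0 N * x) m = (x m).rev := rfl

lemma w0_sq (N : ℕ) : w0 N * w0 N = 1 := by
  apply Equiv.ext
  intro m
  simp [w0, Equiv.Perm.mul_apply, Fin.rev_rev]

lemma w0_fpf (n : ℕ) (m : Fin (2*n)) : w0 (2*n) m ≠ m := by
  intro e
  have h1 : ((Fin.rev m : Fin (2*n)) : ℕ) = (m : ℕ) := congrArg Fin.val e
  rw [Fin.val_rev] at h1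
  have := m.isLt
  omega

lemma len_w0_mul {N : ℕ} (x : Perm (Fin N)) :
    len (w0 N * x) + len x
      = (Finset.univ.filter fun p : Fin N × Fin N => p.1 < p.2).card := by
  classical
  unfold len
  have e1 : (Finset.univ.filter fun p : Fin N × Fin N =>
        p.1 < p.2 ∧ (w0 N * x) p.2 < (w0 N * x) p.1)
      = Finset.univ.filter fun p : Fin N × Fin N => p.1 < p.2 ∧ x p.1 < x p.2 := by
    apply Finset.filter_congr
    intro p _
    rw [w0_mul_apply, w0_mul_apply]
    rw [Fin.rev_lt_rev]
  rw [e1, ← Finset.card_union_of_disjoint]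
  · congr 1
    ext p
    simp only [Finset.mem_union, Finset.mem_filter, Finset.mem_univ, true_and]
    constructor
    · rintro (⟨h1, _⟩ | ⟨h1, _⟩) <;> exact h1
    · intro h1
      rcases lt_trichotomy (x p.1) (x p.2) with h | h | h
      · exact Or.inl ⟨h1, h⟩
      · exact absurd (x.injective h) (ne_of_lt h1)
      · exact Or.inr ⟨h1, h⟩
  · rw [Finset.disjoint_left]
    intro p hp1 hp2
    simp only [Finset.mem_filter, Finset.mem_univ, true_and] at hp1 hp2
    exact absurd hp2.2 (not_lt.mpr (le_of_lt hp1.2))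

lemma le_w0 {N : ℕ} {u v : Perm (Fin N)} (h : bruhatLE' u v) :
    bruhatLE' (w0 N * v) (w0 N * u) := by
  induction h with
  | refl => exact le_refl' _
  | @tail bq c h1 h2 ih =>
    obtain ⟨t, hsw, rfl, hl⟩ := h2
    obtain ⟨i, j, hij, rfl⟩ := hsw
    have key : w0 N * bq = (w0 N * (bq * Equiv.swap i j)) * Equiv.swap i j := by
      rw [mul_assoc, mul_assoc, Equiv.swap_mul_self, mul_one]
    refine Relation.ReflTransGen.head ⟨Equiv.swap i j, ⟨i, j, hij, rfl⟩, key, ?_⟩ ih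
    have e1 := len_w0_mul (N := N) (bq * Equiv.swap i j)
    have e2 := len_w0_mul (N := N) bq
    rw [← key] at *
    omega

lemma w0_w0_mul {N : ℕ} (x : Perm (Fin N)) : w0 N * (w0 N * x) = x := by
  rw [← mul_assoc, w0_sq, one_mul]

lemma twInv_iff {N : ℕ} (x : Perm (Fin N)) :
    x ∈ twInvSet N ↔ (w0 N * x) * (w0 N * x) = 1 := by
  unfold twInvSet theta
  simp only [Set.mem_setOf_eq]
  constructor
  · intro h
    have h2 : (w0 N * x * w0 N) * x = x⁻¹ * x := by rw [h]
    rw [inv_mul_cancel] at h2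
    calc (w0 N * x) * (w0 N * x) = (w0 N * x * w0 N) * x := by group
      _ = 1 := h2
  · intro h
    have h2 : (w0 N * x * w0 N) * x = 1 := by
      calc (w0 N * x * w0 N) * x = (w0 N * x) * (w0 N * x) := by group
        _ = 1 := h
    calc w0 N * x * w0 N = (w0 N * x * w0 N) * (x * x⁻¹) := by
          rw [mul_inv_cancel, mul_one]
      _ = ((w0 N * x * w0 N) * x) * x⁻¹ := by group
      _ = x⁻¹ := by rw [h2, one_mul]

lemma cycleType_fpf {n : ℕ} {y : Perm (Fin (2*n))} (hy : y * y = 1) (hfpf : ∀ m, y m ≠ m) :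
    y.cycleType = Multiset.replicate n 2 := by
  have hall : ∀ c ∈ y.cycleType, c = 2 := by
    intro c hc
    have h2 := Equiv.Perm.two_le_of_mem_cycleType hc
    have hdvd : c ∣ orderOf y := by
      rw [← Equiv.Perm.lcm_cycleType]
      exact Multiset.dvd_lcm hc
    have hord : orderOf y ∣ 2 := orderOf_dvd_of_pow_eq_one (by rw [pow_two]; exact hy)
    have h3 : c ∣ 2 := hdvd.trans hord
    have h4 := Nat.le_of_dvd (by norm_num) h3
    omega
  have hrep := Multiset.eq_replicate_of_mem hall
  have hsum := Equiv.Perm.sum_cycleType y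
  have hsupp : y.support = Finset.univ := by
    ext m
    simp [Equiv.Perm.mem_support, hfpf m]
  rw [hsupp, Finset.card_univ, Fintype.card_fin] at hsum
  rw [hrep] at hsum ⊢
  rw [Multiset.sum_replicate, smul_eq_mul] at hsum
  congr 1
  omega

lemma fpf_conj {n : ℕ} {y : Perm (Fin (2*n))} (hy : y * y = 1) (hfpf : ∀ m, y m ≠ m) :
    ∃ w : Perm (Fin (2*n)), y = w⁻¹ * w0 (2*n) * w := by
  have h1 : IsConj y (w0 (2*n)) := by
    rw [Equiv.Perm.isConj_iff_cycleType_eq]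
    rw [cycleType_fpf hy hfpf, cycleType_fpf (w0_sq (2*n)) (w0_fpf n)]
  obtain ⟨c, hc⟩ := isConj_iff.mp h1
  refine ⟨c, ?_⟩
  rw [← hc]
  group

lemma iota_forward {n : ℕ} {x : Perm (Fin (2*n))} (hx : x ∈ iotaSet (2*n)) :
    (w0 (2*n) * x) * (w0 (2*n) * x) = 1 ∧ ∀ m, (w0 (2*n) * x) m ≠ m := by
  obtain ⟨w, rfl⟩ := hx
  have he : w0 (2*n) * (theta w⁻¹ * w) = w⁻¹ * w0 (2*n) * w := by
    unfold theta
    rw [show w0 (2*n) * (w0 (2*n) * w⁻¹ * w0 (2*n) * w)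
      = (w0 (2*n) * w0 (2*n)) * (w⁻¹ * w0 (2*n) * w) by group, w0_sq, one_mul]
  rw [he]
  constructor
  · calc (w⁻¹ * w0 (2*n) * w) * (w⁻¹ * w0 (2*n) * w)
        = w⁻¹ * (w0 (2*n) * w0 (2*n)) * w := by group
      _ = 1 := by rw [w0_sq, mul_one, inv_mul_cancel]
  · intro m hm
    have h2 : w⁻¹ ((w0 (2*n)) (w m)) = m := hm
    have h3 := congrArg w h2
    rw [show ∀ a, w (w⁻¹ a) = a from w.apply_symm_apply] at h3
    exact w0_fpf n (w m) h3

lemma iota_backward {n : ℕ} {x : Perm (Fin (2*n))}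
    (h1 : (w0 (2*n) * x) * (w0 (2*n) * x) = 1) (h2 : ∀ m, (w0 (2*n) * x) m ≠ m) :
    x ∈ iotaSet (2*n) := by
  obtain ⟨w, hw⟩ := fpf_conj h1 h2
  refine ⟨w, ?_⟩
  unfold theta
  calc x = w0 (2*n) * (w0 (2*n) * x) := (w0_w0_mul x).symm
    _ = w0 (2*n) * (w⁻¹ * w0 (2*n) * w) := by rw [hw]
    _ = w0 (2*n) * w⁻¹ * w0 (2*n) * w := by group

end BW

namespace BW
open Equiv Finset

lemma bruhat_eq {N : ℕ} (u v : Equiv.Perm (Fin N)) : bruhatLE u v ↔ bruhatLE' u v := Iff.rfl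

end BW

/-- a twisted involution `w ∉ ι` covers at most one twisted identity in the
Bruhat order on twisted involutions. -/
theorem stmt13 (n : ℕ) (w : Equiv.Perm (Fin (2*n)))
    (hw : w ∈ twInvSet (2*n)) (hw' : w ∉ iotaSet (2*n)) :
    ∀ u u' : Equiv.Perm (Fin (2*n)), u ∈ iotaSet (2*n) → u' ∈ iotaSet (2*n) →
      CovByIn bruhatLE (twInvSet (2*n)) u w → CovByIn bruhatLE (twInvSet (2*n)) u' w →
      u = u' := by
  classical
  intro u u' hu hu' hcov hcov'
  have hBinv : (w0 (2*n) * w) * (w0 (2*n) * w) = 1 := (BW.twInv_iff w).mp hw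
  have hBnf : ∃ f, (w0 (2*n) * w) f = f := by
    by_contra hcon
    push_neg at hcon
    exact hw' (BW.iota_backward hBinv hcon)
  have key : ∀ (v : Equiv.Perm (Fin (2*n))), v ∈ iotaSet (2*n) →
      CovByIn bruhatLE (twInvSet (2*n)) v w →
      ∃ i j : Fin (2*n), (i:ℕ) < (j:ℕ) ∧
        (∀ m, (w0 (2*n) * w) m = m ↔ (m = i ∨ m = j)) ∧
        w0 (2*n) * v = (w0 (2*n) * w) * Equiv.swap i j := by
    intro v hv hcv
    unfold CovByIn at hcv
    obtain ⟨hvT, hwT, hlev, hnev, hminv⟩ := hcv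
    have hAv := BW.iota_forward hv
    apply BW.cover_class (len (w0 (2*n) * v)) (w0 (2*n) * v) (w0 (2*n) * w) le_rfl
      hAv.1 hBinv hAv.2 hBnf
    · exact BW.le_w0 ((BW.bruhat_eq v w).mp hlev)
    · intro e
      exact hnev (mul_left_cancel e).symm
    · intro z hz h1 h2
      have hzT : (w0 (2*n) * z) ∈ twInvSet (2*n) := by
        rw [BW.twInv_iff, BW.w0_w0_mul]
        exact hz
      have hvz : bruhatLE v (w0 (2*n) * z) := by
        rw [BW.bruhat_eq]
        have := BW.le_w0 h2
        rwa [BW.w0_w0_mul] at this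
      have hzw : bruhatLE (w0 (2*n) * z) w := by
        rw [BW.bruhat_eq]
        have := BW.le_w0 h1
        rwa [BW.w0_w0_mul] at this
      rcases hminv (w0 (2*n) * z) hzT hvz hzw with he | he
      · right
        calc z = w0 (2*n) * (w0 (2*n) * z) := (BW.w0_w0_mul z).symm
          _ = w0 (2*n) * v := by rw [he]
      · left
        calc z = w0 (2*n) * (w0 (2*n) * z) := (BW.w0_w0_mul z).symm
          _ = w0 (2*n) * w := by rw [he]
  obtain ⟨i, j, hij, hiff, heq⟩ := key u hu hcov
  obtain ⟨i', j', hij', hiff', heq'⟩ := key u' hu' hcov'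
  have d1 := (hiff' i).mp ((hiff i).mpr (Or.inl rfl))
  have d2 := (hiff' j).mp ((hiff j).mpr (Or.inr rfl))
  have d3 := (hiff i').mp ((hiff' i').mpr (Or.inl rfl))
  have v1 := d1.imp (congrArg Fin.val) (congrArg Fin.val)
  have v2 := d2.imp (congrArg Fin.val) (congrArg Fin.val)
  have v3 := d3.imp (congrArg Fin.val) (congrArg Fin.val)
  have hvals : (i:ℕ) = (i':ℕ) ∧ (j:ℕ) = (j':ℕ) := by omega
  have hii : i = i' := Fin.ext hvals.1
  have hjj : j = j' := Fin.ext hvals.2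
  have hfin : w0 (2*n) * u = w0 (2*n) * u' := by
    rw [heq, heq', hii, hjj]
  exact mul_left_cancel hfin
end

section
/- Let Π be a finite poset with a maximum element and M a special partial matching of Π. If x ∈ Π satisfies M(x) ≤ x, then M maps the principal order ideal I_x = {y : y ≤ x} into itself; consequently, if M(x) is covered by x, then M restricts to a special partial matching of I_x. -/
open Equiv

/-- an SPM `M` of a finite poset with maximum maps the principal order ideal
`I_x` into itself whenever `M(x) ≤ x`; if moreover `M(x) ⋖ x`, then `M` restricts to an SPM
of `I_x`. -/
theorem stmt14 {α : Type*} [PartialOrder α] [Fintype α] (t : α) (ht : ∀ x, x ≤ t)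
    (M : α → α) (hM : IsSPM (· ≤ ·) Set.univ t M) (x : α) (hx : M x ≤ x) :
    (∀ y, y ≤ x → M y ≤ x) ∧
    (CovByIn (· ≤ ·) Set.univ (M x) x → IsSPM (· ≤ ·) (Set.Iic x) x M) := by
  obtain ⟨-, -, hinv, -, htri, hcov⟩ := hM
  have main : ∀ y, y ≤ x → M y ≤ x := by
    intro y
    refine (wellFounded_gt (α := α)).induction (C := fun y => y ≤ x → M y ≤ x) y ?_
    intro y IH hyx
    rcases eq_or_lt_of_le hyx with rfl | hlt
    · exact hx
    · obtain ⟨z, ⟨hyz, hzx⟩, hmin⟩ :=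
        (wellFounded_lt (α := α)).has_min {z | y < z ∧ z ≤ x} ⟨x, hlt, le_refl x⟩
      have hMz : M z ≤ x := IH z hyz hzx
      by_cases hMy : M y = z
      · rw [hMy]; exact hzx
      · have hcover : CovByIn (· ≤ ·) Set.univ y z := by
          refine ⟨trivial, trivial, hyz.le, hyz.ne, ?_⟩
          intro w _ hyw hwz
          rcases eq_or_lt_of_le hyw with h1 | h1
          · exact Or.inl h1.symm
          rcases eq_or_lt_of_le hwz with h2 | h2
          · exact Or.inr h2
          · exact absurd h2 (hmin w ⟨h1, h2.le.trans hzx⟩)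
        exact (hcov y trivial z trivial hcover hMy).1.trans hMz
  refine ⟨main, ?_⟩
  intro hcv
  refine ⟨le_refl x, fun y hy => main y hy, fun y _ => hinv y trivial, ?_, ?_, ?_⟩
  · obtain ⟨-, -, h1, h2, h3⟩ := hcv
    exact ⟨hx, le_refl x, h1, h2, fun z _ => h3 z trivial⟩
  · intro y hy
    rcases htri y trivial with h | h | h
    · obtain ⟨-, -, h1, h2, h3⟩ := h
      exact Or.inl ⟨main y hy, hy, h1, h2, fun z _ => h3 z trivial⟩
    · exact Or.inr (Or.inl h)
    · obtain ⟨-, -, h1, h2, h3⟩ := h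
      exact Or.inr (Or.inr ⟨hy, main y hy, h1, h2, fun z _ => h3 z trivial⟩)
  · intro y _ z hz hyz hne
    have hc : CovByIn (· ≤ ·) Set.univ y z := by
      obtain ⟨-, -, h1, h2, h3⟩ := hyz
      exact ⟨trivial, trivial, h1, h2, fun w _ hw1 hw2 =>
        h3 w (Set.mem_Iic.mpr (hw2.trans hz)) hw1 hw2⟩
    exact hcov y trivial z trivial hc hne
end
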